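/- arXiv:2511.21200 — 3 statements merged into one kernel-verified Lean document; each statement's English description precedes it below -/
import Mathlib

section
/- For a commutative ring R, the polynomial ring R[X] is an n-OAF ring if and only if R is isomorphic to a finite direct product of fields. -/
/-- A proper ideal `I` is an `n`-OA ideal (`n`-`1`-absorbing prime) if whenever a product of
`n+1` nonunits lies in `I`, then the product of the first `n` of them lies in `I` or the last
one lies in `I`. -/
def IsNOAIdeal {R : Type*} [CommRing R] (n : ℕ) (I : Ideal R) : Prop :=
  I ≠ ⊤ ∧ ∀ a : Fin (n + 1) → R, (∀ i, ¬IsUnit (a i)) → (∏ i, a i) ∈ I →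
    (∏ i : Fin n, a i.castSucc) ∈ I ∨ a (Fin.last n) ∈ I

/-- An ideal has an `n`-OA-factorization if it is a product of finitely many `n`-OA ideals. -/
def HasNOAFactorization {R : Type*} [CommRing R] (n : ℕ) (I : Ideal R) : Prop :=
  ∃ (m : ℕ) (J : Fin m → Ideal R), 0 < m ∧ (∀ i, IsNOAIdeal n (J i)) ∧ I = ∏ i, J i

/-- A ring is an `n`-OAF ring if every proper ideal has an `n`-OA-factorization. -/
def IsNOAFRing (R : Type*) [CommRing R] (n : ℕ) : Prop :=
  ∀ I : Ideal R, I ≠ ⊤ → HasNOAFactorization n I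

/-- A general ZPI-ring: every proper ideal is a finite product of prime ideals. -/
def IsGeneralZPIRing (R : Type*) [CommRing R] : Prop :=
  ∀ I : Ideal R, I ≠ ⊤ →
    ∃ (m : ℕ) (J : Fin m → Ideal R), 0 < m ∧ (∀ i, (J i).IsPrime) ∧ I = ∏ i, J i

open Polynomial

section Helpers

variable {S : Type*} [CommRing S] {S' : Type*} [CommRing S']

lemma ideal_map_finprod (f : S →+* S') {ι : Type*} (s : Finset ι) (J : ι → Ideal S) :
    Ideal.map f (∏ i ∈ s, J i) = ∏ i ∈ s, Ideal.map f (J i) :=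
  map_prod (Ideal.mapHom f) J s

lemma ideal_sum_le_iff {ι : Type*} {s : Finset ι} {T : ι → Ideal S} {K : Ideal S} :
    (∑ j ∈ s, T j) ≤ K ↔ ∀ j ∈ s, T j ≤ K := by
  classical
  induction s using Finset.induction_on with
  | empty => simp
  | insert a s h ih =>
    rw [Finset.sum_insert h, Submodule.add_eq_sup, sup_le_iff, ih]
    simp

lemma ideal_le_sum {ι : Type*} {s : Finset ι} (T : ι → Ideal S) {j : ι} (hj : j ∈ s) :
    T j ≤ ∑ i ∈ s, T i := by
  classical
  induction s using Finset.induction_on with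
  | empty => simp at hj
  | insert _ _ h ih =>
    rw [Finset.sum_insert h, Submodule.add_eq_sup]
    rcases Finset.mem_insert.mp hj with rfl | hj'
    · exact le_sup_left
    · exact (ih hj').trans le_sup_right

lemma ideal_prod_mono {ι : Type*} {s : Finset ι} {A B : ι → Ideal S}
    (h : ∀ i ∈ s, A i ≤ B i) : (∏ i ∈ s, A i) ≤ ∏ i ∈ s, B i := by
  classical
  induction s using Finset.induction_on with
  | empty => simp
  | insert a s h' ih =>
    rw [Finset.prod_insert h', Finset.prod_insert h']
    exact Ideal.mul_mono (h _ (Finset.mem_insert_self _ _))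
      (ih fun i hi => h i (Finset.mem_insert_of_mem hi))

lemma Ideal.IsPrime.isNOAIdeal {I : Ideal S} (hI : I.IsPrime) (n : ℕ) : IsNOAIdeal n I := by
  refine ⟨hI.ne_top, fun a _ hprod => ?_⟩
  rw [Fin.prod_univ_castSucc] at hprod
  exact hI.mem_or_mem hprod

lemma IsNOAIdeal.prod_mul_mem {n : ℕ} {I : Ideal S} (hI : IsNOAIdeal n I)
    (b : Fin n → S) (y : S) (hb : ∀ i, ¬IsUnit (b i)) (hy : ¬IsUnit y)
    (h : (∏ i, b i) * y ∈ I) : (∏ i, b i) ∈ I ∨ y ∈ I := by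
  have := hI.2 (Fin.snoc b y) ?_ ?_
  · simpa [Fin.snoc_castSucc, Fin.snoc_last] using this
  · intro i
    refine Fin.lastCases ?_ ?_ i
    · simpa [Fin.snoc_last] using hy
    · intro j
      simpa [Fin.snoc_castSucc] using hb j
  · rw [Fin.prod_univ_castSucc]
    simpa [Fin.snoc_castSucc, Fin.snoc_last] using h

end Helpers
section Helpers2

variable {S : Type*} [CommRing S] {S' : Type*} [CommRing S']

lemma IsNOAIdeal.isPrime_of_witness {n : ℕ} (hn : 0 < n) {I : Ideal S}
    (hI : IsNOAIdeal n I) {u v : S} (hu : ¬IsUnit u) (hv : ¬IsUnit v) (huv : u + v = 1) :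
    I.IsPrime := by
  obtain ⟨m, rfl⟩ : ∃ m, n = m + 1 := ⟨n - 1, (Nat.succ_pred_eq_of_pos hn).symm⟩
  refine ⟨hI.1, ?_⟩
  intro x y hxy
  by_cases hx : IsUnit x
  · obtain ⟨x', hx'⟩ := isUnit_iff_exists_inv'.mp hx
    right
    have : y = x' * (x * y) := by rw [← mul_assoc, hx', one_mul]
    rw [this]
    exact I.mul_mem_left _ hxy
  by_cases hy : IsUnit y
  · obtain ⟨y', hy'⟩ := isUnit_iff_exists_inv.mp hy
    left
    have : x = (x * y) * y' := by rw [mul_assoc, hy', mul_one]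
    rw [this]
    exact I.mul_mem_right _ hxy
  by_cases hyI : y ∈ I
  · exact Or.inr hyI
  left
  have key : ∀ g : Fin m → S, (∀ i, g i = u ∨ g i = v) → x * ∏ i, g i ∈ I := by
    intro g hg
    have hgnu : ∀ i, ¬IsUnit (g i) := by
      intro i
      rcases hg i with h | h <;> rw [h] <;> assumption
    have hcons : (∏ i, Fin.cons x g i) = x * ∏ i, g i := by
      rw [Fin.prod_univ_succ]
      simp [Fin.cons_succ]
    have := hI.prod_mul_mem (Fin.cons x g) y ?_ hy ?_
    · rcases this with h | h
      · rwa [hcons] at h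
      · exact absurd h hyI
    · intro i
      refine Fin.cases ?_ ?_ i
      · simpa using hx
      · intro j; simpa using hgnu j
    · rw [hcons]
      have heq : (x * ∏ i, g i) * y = (∏ i, g i) * (x * y) := by ring
      rw [heq]
      exact I.mul_mem_left _ hxy
  have hx1 : x = x * ∏ _i : Fin m, (u + v) := by simp [huv]
  rw [hx1, Finset.prod_add, Finset.mul_sum]
  refine Ideal.sum_mem _ ?_
  intro t _
  have : (∏ i ∈ t, u) * ∏ i ∈ Finset.univ \ t, v = ∏ i, (if i ∈ t then u else v) := by
    rw [Finset.prod_ite]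
    congr 1
    · congr 1
      ext i
      simp
    · congr 1
      ext i
      simp [Finset.mem_sdiff]
  rw [this]
  exact key _ (fun i => by by_cases h : i ∈ t <;> simp [h])

lemma IsNOAIdeal.comap_equiv {n : ℕ} (e : S ≃+* S') {I : Ideal S'}
    (hI : IsNOAIdeal n I) : IsNOAIdeal n (I.comap (e : S →+* S')) := by
  constructor
  · intro h
    refine hI.1 (Ideal.eq_top_iff_one _ |>.mpr ?_)
    have : (1 : S) ∈ I.comap (e : S →+* S') := h ▸ Submodule.mem_top
    simpa using this
  · intro a ha hprod
    have := hI.2 (fun i => e (a i)) (fun i hui => ha i (by simpa using hui.map e.symm)) ?_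
    · rcases this with h | h
      · left
        simpa [Ideal.mem_comap, map_prod] using h
      · right
        simpa [Ideal.mem_comap] using h
    · rw [← map_prod]
      simpa [Ideal.mem_comap] using hprod

lemma isNOAFRing_of_equiv (e : S ≃+* S') {n : ℕ} (h : IsNOAFRing S' n) : IsNOAFRing S n := by
  intro I hI
  have hK : (I.comap (e.symm : S' →+* S)) ≠ ⊤ := by
    intro ht
    refine hI (Ideal.eq_top_iff_one _ |>.mpr ?_)
    have : (1 : S') ∈ I.comap (e.symm : S' →+* S) := ht ▸ Submodule.mem_top
    simpa using this
  obtain ⟨m, J, hm, hJ, hfac⟩ := h _ hK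
  refine ⟨m, fun i => (J i).comap (e : S →+* S'), hm, fun i => (hJ i).comap_equiv e, ?_⟩
  have : I = (I.comap (e.symm : S' →+* S)).comap (e : S →+* S') := by
    ext x; simp [Ideal.mem_comap]
  rw [this, hfac]
  have hks : ∀ K : Ideal S', K.comap (e : S →+* S') = K.map (e.symm : S' →+* S) := by
    intro K
    ext x
    rw [Ideal.mem_comap, Ideal.mem_map_iff_of_surjective (e.symm : S' →+* S) e.symm.surjective]
    constructor
    · intro hx; exact ⟨e x, hx, e.symm_apply_apply _⟩
    · rintro ⟨y, hy, rfl⟩; simpa using hy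
  rw [hks, ideal_map_finprod]
  exact Finset.prod_congr rfl fun i _ => (hks (J i)).symm

lemma isGeneralZPIRing_of_equiv (e : S ≃+* S') (h : IsGeneralZPIRing S') :
    IsGeneralZPIRing S := by
  intro I hI
  have hK : (I.comap (e.symm : S' →+* S)) ≠ ⊤ := by
    intro ht
    refine hI (Ideal.eq_top_iff_one _ |>.mpr ?_)
    have : (1 : S') ∈ I.comap (e.symm : S' →+* S) := ht ▸ Submodule.mem_top
    simpa using this
  obtain ⟨m, J, hm, hJ, hfac⟩ := h _ hK
  refine ⟨m, fun i => (J i).comap (e : S →+* S'), hm, fun i => (hJ i).comap _, ?_⟩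
  have h2 : I = (I.comap (e.symm : S' →+* S)).comap (e : S →+* S') := by
    ext x; simp [Ideal.mem_comap]
  have h3 : ∀ K : Ideal S', K.comap (e : S →+* S') = K.map (e.symm : S' →+* S) := by
    intro K
    ext x
    rw [Ideal.mem_comap, Ideal.mem_map_iff_of_surjective (e.symm : S' →+* S) e.symm.surjective]
    constructor
    · intro hx; exact ⟨e x, hx, e.symm_apply_apply _⟩
    · rintro ⟨y, hy, rfl⟩; simpa using hy
  rw [h2, hfac, h3, ideal_map_finprod]
  exact Finset.prod_congr rfl fun i _ => (h3 (J i)).symm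

lemma IsGeneralZPIRing.of_surjective (f : S →+* S') (hf : Function.Surjective f)
    (h : IsGeneralZPIRing S) : IsGeneralZPIRing S' := by
  intro I hI
  have hc : I.comap f ≠ ⊤ := by
    intro ht
    refine hI ?_
    rw [← Ideal.map_comap_of_surjective f hf I, ht, Ideal.map_top]
  obtain ⟨m, J, hm, hJ, hfac⟩ := h _ hc
  have hker : ∀ i, RingHom.ker f ≤ J i := by
    intro i
    have h1 : RingHom.ker f ≤ I.comap f := by
      intro x hx
      rw [Ideal.mem_comap, RingHom.mem_ker.mp hx]
      exact I.zero_mem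
    refine (h1.trans ?_)
    rw [hfac]
    exact Ideal.prod_le_inf.trans (Finset.inf_le (Finset.mem_univ i))
  refine ⟨m, fun i => (J i).map f, hm,
    fun i => Ideal.map_isPrime_of_surjective hf (hker i), ?_⟩
  rw [← Ideal.map_comap_of_surjective f hf I, hfac, ideal_map_finprod]

lemma IsGeneralZPIRing.isNOAFRing (h : IsGeneralZPIRing S) (n : ℕ) : IsNOAFRing S n :=
  fun I hI =>
    let ⟨m, J, hm, hJ, hfac⟩ := h I hI
    ⟨m, J, hm, fun i => (hJ i).isNOAIdeal n, hfac⟩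

end Helpers2
section PolyHelpers

variable {S : Type*} [CommRing S]

lemma coeff_one_mul' (p q : S[X]) :
    (p * q).coeff 1 = p.coeff 0 * q.coeff 1 + p.coeff 1 * q.coeff 0 := by
  rw [Polynomial.coeff_mul, Finset.Nat.sum_antidiagonal_eq_sum_range_succ_mk]
  simp [Finset.sum_range_succ]

/-- The ideal of polynomials whose 0th coefficient lies in `A` and first coefficient
lies in `A ⊔ B`. -/
def coeffIdeal (A B : Ideal S) : Ideal S[X] where
  carrier := {f | f.coeff 0 ∈ A ∧ f.coeff 1 ∈ A ⊔ B}
  add_mem' := by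
    intro f g hf hg
    exact ⟨by simpa using A.add_mem hf.1 hg.1, by simpa using (A ⊔ B).add_mem hf.2 hg.2⟩
  zero_mem' := ⟨by simp, by simp⟩
  smul_mem' := by
    intro c f hf
    constructor
    · rw [smul_eq_mul, Polynomial.mul_coeff_zero]
      exact A.mul_mem_left _ hf.1
    · rw [smul_eq_mul, coeff_one_mul']
      exact (A ⊔ B).add_mem ((A ⊔ B).mul_mem_left _ hf.2)
        ((A ⊔ B).mul_mem_left _ (Submodule.mem_sup_left hf.1))

lemma mem_coeffIdeal {A B : Ideal S} {f : S[X]} :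
    f ∈ coeffIdeal A B ↔ f.coeff 0 ∈ A ∧ f.coeff 1 ∈ A ⊔ B := Iff.rfl

lemma coeff_zero_mem_comap_C {Q : Ideal S[X]} (hX : (X : S[X]) ∈ Q) {f : S[X]} (hf : f ∈ Q) :
    f.coeff 0 ∈ Q.comap (C : S →+* S[X]) := by
  rw [Ideal.mem_comap]
  have h : (C (f.coeff 0) : S[X]) = f - X * f.divX := by
    rw [eq_sub_iff_add_eq, add_comm, Polynomial.X_mul_divX_add f]
  rw [h]
  exact Q.sub_mem hf (Q.mul_mem_right _ hX)

lemma prod_le_coeffIdeal {ι : Type*} [DecidableEq ι] (P : ι → Ideal S[X])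
    (s : Finset ι) (hs : s.Nonempty) (hX : ∀ i ∈ s, (X : S[X]) ∈ P i) :
    (∏ i ∈ s, P i) ≤ coeffIdeal (∏ i ∈ s, (P i).comap (C : S →+* S[X]))
      (∑ j ∈ s, ∏ i ∈ s.erase j, (P i).comap (C : S →+* S[X])) := by
  induction hs using Finset.Nonempty.cons_induction with
  | singleton a =>
    intro f hf
    rw [Finset.prod_singleton] at hf
    refine ⟨?_, ?_⟩
    · rw [Finset.prod_singleton]
      exact coeff_zero_mem_comap_C (hX a (Finset.mem_singleton_self a)) hf
    · have : (∑ j ∈ ({a} : Finset ι), ∏ i ∈ ({a} : Finset ι).erase j,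
          (P i).comap (C : S →+* S[X])) = ⊤ := by
        rw [Finset.sum_singleton, Finset.erase_singleton, Finset.prod_empty,
          Ideal.one_eq_top]
      rw [this, sup_top_eq]
      trivial
  | cons a s ha hs ih =>
    have hXa : (X : S[X]) ∈ P a := hX a (Finset.mem_cons_self a s)
    have hXs : ∀ i ∈ s, (X : S[X]) ∈ P i := fun i hi => hX i (Finset.mem_cons_of_mem hi)
    rw [Finset.prod_cons]
    set p : ι → Ideal S := fun i => (P i).comap (C : S →+* S[X]) with hp
    set A' : Ideal S := ∏ i ∈ Finset.cons a s ha, p i with hA'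
    set B' : Ideal S := ∑ j ∈ Finset.cons a s ha, ∏ i ∈ (Finset.cons a s ha).erase j, p i
      with hB'
    have hA'eq : A' = p a * ∏ i ∈ s, p i := by rw [hA', Finset.prod_cons]
    refine Ideal.mul_le.mpr ?_
    intro r hr g hg
    obtain ⟨hg0, hg1⟩ := ih hXs hg
    have hr0 : r.coeff 0 ∈ p a := coeff_zero_mem_comap_C hXa hr
    constructor
    · rw [Polynomial.mul_coeff_zero, hA'eq]
      exact Ideal.mul_mem_mul hr0 hg0
    · rw [coeff_one_mul']
      have herase : (Finset.cons a s ha).erase a = s := by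
        rw [Finset.cons_eq_insert, Finset.erase_insert ha]
      have hterm2 : r.coeff 1 * g.coeff 0 ∈ A' ⊔ B' := by
        refine Submodule.mem_sup_right ?_
        refine ideal_le_sum (fun j => ∏ i ∈ (Finset.cons a s ha).erase j, p i)
          (Finset.mem_cons_self a s) ?_
        show r.coeff 1 * g.coeff 0 ∈ ∏ i ∈ (Finset.cons a s ha).erase a, p i
        rw [herase]
        exact Ideal.mul_mem_left _ _ hg0
      have hterm1 : r.coeff 0 * g.coeff 1 ∈ A' ⊔ B' := by
        have hmm : r.coeff 0 * g.coeff 1 ∈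
            p a * ((∏ i ∈ s, p i) ⊔ ∑ j ∈ s, ∏ i ∈ s.erase j, p i) :=
          Ideal.mul_mem_mul hr0 hg1
        have hsplit : p a * ((∏ i ∈ s, p i) ⊔ ∑ j ∈ s, ∏ i ∈ s.erase j, p i) ≤ A' ⊔ B' := by
          rw [← Submodule.add_eq_sup (p := ∏ i ∈ s, p i), mul_add]
          rw [Submodule.add_eq_sup]
          refine sup_le ?_ ?_
          · rw [← hA'eq]
            exact le_sup_left
          · rw [Finset.mul_sum]
            refine le_trans (ideal_sum_le_iff.mpr ?_) le_sup_right
            intro j hj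
            have hja : j ≠ a := fun h => ha (h ▸ hj)
            have heq2 : (Finset.cons a s ha).erase j = Finset.cons a (s.erase j)
                (fun h => ha (Finset.mem_of_mem_erase h)) := by
              rw [Finset.cons_eq_insert, Finset.cons_eq_insert,
                Finset.erase_insert_of_ne hja.symm]
            refine le_trans ?_ (ideal_le_sum _ (Finset.mem_cons_of_mem hj))
            rw [heq2, Finset.prod_cons]
        exact hsplit hmm
      exact (A' ⊔ B').add_mem hterm1 hterm2

lemma mem_prod_of_one_mem_sum {ι : Type*} [DecidableEq ι] (p : ι → Ideal S) (s : Finset ι)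
    {x : S} (hx : ∀ j ∈ s, x ∈ p j)
    (h1 : (1 : S) ∈ ∑ j ∈ s, ∏ i ∈ s.erase j, p i) :
    x ∈ ∏ i ∈ s, p i := by
  have hxx : x ∈ Ideal.span {x} * (∑ j ∈ s, ∏ i ∈ s.erase j, p i) := by
    have := Ideal.mul_mem_mul (Ideal.mem_span_singleton_self x) h1
    simpa using this
  have hle : Ideal.span {x} * (∑ j ∈ s, ∏ i ∈ s.erase j, p i) ≤ ∏ i ∈ s, p i := by
    rw [Finset.mul_sum]
    refine ideal_sum_le_iff.mpr ?_
    intro j hj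
    have h2 : Ideal.span {x} * ∏ i ∈ s.erase j, p i ≤ p j * ∏ i ∈ s.erase j, p i :=
      Ideal.mul_mono_left (Ideal.span_le.mpr (by simpa using hx j hj))
    rwa [Finset.mul_prod_erase _ _ hj] at h2
  exact hle hxx

end PolyHelpers
section Key

variable {S : Type*} [CommRing S]

lemma one_mem_sum_of_X_mem_prod {m : ℕ} (hm : 0 < m) (P : Fin m → Ideal S[X])
    (hXP : ∀ i, (X : S[X]) ∈ P i) (hX : (X : S[X]) ∈ ∏ i, P i) :
    (1 : S) ∈ ∑ j : Fin m, ∏ i ∈ Finset.univ.erase j, (P i).comap (C : S →+* S[X]) := by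
  have huniv : (Finset.univ : Finset (Fin m)).Nonempty := ⟨⟨0, hm⟩, Finset.mem_univ _⟩
  obtain ⟨_, hc1⟩ := prod_le_coeffIdeal P Finset.univ huniv (fun i _ => hXP i) hX
  rw [Polynomial.coeff_X_one] at hc1
  have hsub : (∏ i, (P i).comap (C : S →+* S[X])) ⊔
      (∑ j : Fin m, ∏ i ∈ Finset.univ.erase j, (P i).comap (C : S →+* S[X])) ≤
      ∑ j : Fin m, ∏ i ∈ Finset.univ.erase j, (P i).comap (C : S →+* S[X]) := by
    refine sup_le ?_ le_rfl
    refine le_trans ?_ (ideal_le_sum _ (Finset.mem_univ ⟨0, hm⟩))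
    rw [← Finset.mul_prod_erase _ _ (Finset.mem_univ (⟨0, hm⟩ : Fin m))]
    exact Ideal.mul_le_right
  exact hsub hc1

lemma isField_of_isGeneralZPIRing_polynomial {D : Type*} [CommRing D] [IsDomain D]
    (h : IsGeneralZPIRing D[X]) : IsField D := by
  refine ⟨exists_pair_ne D, mul_comm, ?_⟩
  intro a ha
  by_contra hb
  push_neg at hb
  set I : Ideal D[X] := Ideal.span {(C (a * a) : D[X]), X} with hI
  have hXI : (X : D[X]) ∈ I := Ideal.subset_span (by simp)
  have hCI : (C (a * a) : D[X]) ∈ I := Ideal.subset_span (by simp)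
  have hItop : I ≠ ⊤ := by
    intro ht
    have h1 : (1 : D[X]) ∈ I := ht ▸ Submodule.mem_top
    rw [hI, Ideal.mem_span_pair] at h1
    obtain ⟨u, v, huv⟩ := h1
    have hco := congrArg (fun q => Polynomial.coeff q 0) huv
    simp only [Polynomial.coeff_add, Polynomial.mul_coeff_zero, Polynomial.coeff_C_zero,
      Polynomial.coeff_X_zero, Polynomial.coeff_one_zero, mul_zero, add_zero] at hco
    exact hb (u.coeff 0 * a) (by linear_combination hco)
  obtain ⟨m, P, hm, hP, hfac⟩ := h I hItop
  have hle : ∀ i, (∏ i, P i) ≤ P i := fun i =>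
    Ideal.prod_le_inf.trans (Finset.inf_le (Finset.mem_univ i))
  have hXP : ∀ i, (X : D[X]) ∈ P i := fun i => hle i (hfac ▸ hXI)
  set p : Fin m → Ideal D := fun i => (P i).comap (C : D →+* D[X]) with hpdef
  have hpa : ∀ i, a ∈ p i := by
    intro i
    haveI := hP i
    have h2 : a * a ∈ p i := by
      rw [hpdef, Ideal.mem_comap, map_mul]
      have := hle i (hfac ▸ hCI)
      rwa [map_mul] at this
    have hprime : (p i).IsPrime := Ideal.comap_isPrime _ _
    rcases hprime.mem_or_mem h2 with h3 | h3 <;> exact h3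
  have hone : (1 : D) ∈ ∑ j : Fin m, ∏ i ∈ Finset.univ.erase j, p i :=
    one_mem_sum_of_X_mem_prod hm P hXP (hfac ▸ hXI)
  have haprod : a ∈ ∏ i, p i :=
    mem_prod_of_one_mem_sum p Finset.univ (fun j _ => hpa j) hone
  have hCa : (C a : D[X]) ∈ I := by
    have h4 : (C a : D[X]) ∈ Ideal.map (C : D →+* D[X]) (∏ i, p i) :=
      Ideal.mem_map_of_mem _ haprod
    rw [ideal_map_finprod] at h4
    have h5 : (∏ i, Ideal.map (C : D →+* D[X]) (p i)) ≤ ∏ i, P i :=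
      ideal_prod_mono fun i _ => Ideal.map_comap_le
    rw [hfac]
    exact h5 h4
  rw [hI, Ideal.mem_span_pair] at hCa
  obtain ⟨u, v, huv⟩ := hCa
  have hco := congrArg (fun q => Polynomial.coeff q 0) huv
  simp only [Polynomial.coeff_add, Polynomial.mul_coeff_zero, Polynomial.coeff_C_zero,
    Polynomial.coeff_X_zero, mul_zero, add_zero] at hco
  have hcan : a * (u.coeff 0 * a) = a * 1 := by linear_combination hco
  have hone' := mul_left_cancel₀ ha hcan
  exact hb (u.coeff 0) (by linear_combination hone')

end Key
section Forward

universe v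

lemma forward_main {R : Type v} [CommRing R] [Nontrivial R]
    (hz : IsGeneralZPIRing (Polynomial R)) :
    ∃ (m : ℕ) (F : Fin m → Type v) (_ : ∀ i, Field (F i)),
      Nonempty (R ≃+* ((i : Fin m) → F i)) := by
  have hXtop : (Ideal.span {(X : R[X])}) ≠ ⊤ := by
    intro ht
    have h1 : (1 : R[X]) ∈ Ideal.span {(X : R[X])} := ht ▸ Submodule.mem_top
    rw [Ideal.mem_span_singleton] at h1
    exact Polynomial.not_isUnit_X (isUnit_of_dvd_one h1)
  obtain ⟨m, P, hm, hP, hfac⟩ := hz _ hXtop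
  have hle : ∀ i, (∏ i, P i) ≤ P i := fun i =>
    Ideal.prod_le_inf.trans (Finset.inf_le (Finset.mem_univ i))
  have hXmem : (X : R[X]) ∈ Ideal.span {(X : R[X])} := Ideal.subset_span rfl
  have hXP : ∀ i, (X : R[X]) ∈ P i := fun i => hle i (hfac ▸ hXmem)
  set p : Fin m → Ideal R := fun i => (P i).comap (C : R →+* R[X]) with hpdef
  have hpprime : ∀ i, (p i).IsPrime := by
    intro i
    haveI := hP i
    exact Ideal.comap_isPrime _ _
  have hone : (1 : R) ∈ ∑ j : Fin m, ∏ i ∈ Finset.univ.erase j, p i :=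
    one_mem_sum_of_X_mem_prod hm P hXP (hfac ▸ hXmem)
  have hbot : (∏ i, p i) = ⊥ := by
    refine le_antisymm ?_ bot_le
    intro x hx
    have h4 : (C x : R[X]) ∈ Ideal.map (C : R →+* R[X]) (∏ i, p i) :=
      Ideal.mem_map_of_mem _ hx
    rw [ideal_map_finprod] at h4
    have h5 : (∏ i, Ideal.map (C : R →+* R[X]) (p i)) ≤ ∏ i, P i :=
      ideal_prod_mono fun i _ => Ideal.map_comap_le
    have h6 : (C x : R[X]) ∈ Ideal.span {(X : R[X])} := by
      rw [hfac]; exact h5 h4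
    rw [Ideal.mem_span_singleton] at h6
    obtain ⟨c, hc⟩ := h6
    have : x = (X * c).coeff 0 := by rw [← hc, Polynomial.coeff_C_zero]
    rw [Polynomial.mul_coeff_zero, Polynomial.coeff_X_zero, zero_mul] at this
    simpa using this
  have hcop : Pairwise (Function.onFun IsCoprime p) := by
    intro i j hij
    rw [Function.onFun, Ideal.isCoprime_iff_sup_eq, Ideal.eq_top_iff_one]
    have hsum : (∑ k : Fin m, ∏ l ∈ Finset.univ.erase k, p l) ≤ p i ⊔ p j := by
      refine ideal_sum_le_iff.mpr ?_
      intro k _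
      by_cases hk : k = i
      · subst hk
        have hjmem : j ∈ Finset.univ.erase k :=
          Finset.mem_erase.mpr ⟨Ne.symm hij, Finset.mem_univ j⟩
        exact le_trans (Ideal.prod_le_inf.trans (Finset.inf_le hjmem)) le_sup_right
      · have himem : i ∈ Finset.univ.erase k :=
          Finset.mem_erase.mpr ⟨fun h => hk h.symm, Finset.mem_univ i⟩
        exact le_trans (Ideal.prod_le_inf.trans (Finset.inf_le himem)) le_sup_left
    exact hsum hone
  have hinf : (⨅ i, p i) = ⊥ := by
    refine le_antisymm ?_ bot_le
    intro x hx
    have hx' : ∀ j ∈ Finset.univ, x ∈ p j := fun j _ => (Submodule.mem_iInf _).mp hx j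
    have hmem := mem_prod_of_one_mem_sum p Finset.univ hx' hone
    rw [hbot] at hmem
    exact hmem
  have hfield : ∀ i, IsField (R ⧸ p i) := by
    intro i
    haveI := hpprime i
    refine isField_of_isGeneralZPIRing_polynomial ?_
    have hq : IsGeneralZPIRing (R[X] ⧸ Ideal.map (C : R →+* R[X]) (p i)) :=
      IsGeneralZPIRing.of_surjective (Ideal.Quotient.mk _) Ideal.Quotient.mk_surjective hz
    exact isGeneralZPIRing_of_equiv
      (Ideal.polynomialQuotientEquivQuotientPolynomial (p i)) hq
  refine ⟨m, fun i => R ⧸ p i, fun i => (hfield i).toField, ⟨?_⟩⟩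
  exact (RingEquiv.quotientBot R).symm.trans ((Ideal.quotEquivOfEq hinf.symm).trans
    (Ideal.quotientInfRingEquivPiQuotient p hcop))

end Forward
section Backward

variable {S : Type*} [CommRing S] {T : Type*} [CommRing T]

lemma isGeneralZPIRing_of_pid (A : Type*) [CommRing A] [IsDomain A]
    [IsPrincipalIdealRing A] : IsGeneralZPIRing A := by
  intro I hI
  obtain ⟨a, ha⟩ := (IsPrincipalIdealRing.principal I).principal
  by_cases ha0 : a = 0
  · refine ⟨1, fun _ => ⊥, one_pos, fun _ => Ideal.bot_prime, ?_⟩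
    rw [ha, ha0]
    simp
  have hau : ¬IsUnit a := by
    intro hu
    exact hI (by rw [ha]; exact Ideal.span_singleton_eq_top.mpr hu)
  obtain ⟨f, hfp, hfa⟩ := UniqueFactorizationMonoid.exists_prime_factors a ha0
  set l := f.toList with hl
  have hfl : f = ↑l := (f.coe_toList).symm
  have hlp : l.prod = f.prod := by rw [hfl, Multiset.prod_coe]
  have hlen : 0 < l.length := by
    rcases Nat.eq_zero_or_pos l.length with h0 | h0
    · exfalso
      have hnil : l = [] := List.length_eq_zero_iff.mp h0
      rw [hnil] at hlp
      simp only [List.prod_nil] at hlp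
      apply hau
      have hassoc : Associated (1 : A) a := hlp ▸ hfa
      exact associated_one_iff_isUnit.mp hassoc.symm
    · exact h0
  refine ⟨l.length, fun i => Ideal.span {l.get i}, hlen, ?_, ?_⟩
  · intro i
    have hmem : l.get i ∈ f := by
      rw [hfl]
      exact Multiset.mem_coe.mpr (List.get_mem l i)
    have hp := hfp _ hmem
    exact (Ideal.span_singleton_prime hp.ne_zero).mpr hp
  · have h1 : (∏ i : Fin l.length, Ideal.span {l.get i}) = Ideal.span {∏ i, l.get i} :=
      Ideal.prod_span_singleton _ _
    have h2 : (∏ i : Fin l.length, l.get i) = l.prod := by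
      simpa using Fin.prod_univ_get l
    rw [ha, h1, h2, hlp]
    exact (Ideal.span_singleton_eq_span_singleton.mpr hfa).symm

end Backward
section ProdRing

variable {S : Type*} [CommRing S] {T : Type*} [CommRing T]

lemma ideal_prod_mul_prod (I I' : Ideal S) (J J' : Ideal T) :
    Ideal.prod I J * Ideal.prod I' J' = Ideal.prod (I * I') (J * J') := by
  apply le_antisymm
  · rw [Ideal.mul_le]
    rintro ⟨r, s⟩ hr ⟨r', s'⟩ hr'
    rw [Ideal.mem_prod] at hr hr'
    have : ((r, s) : S × T) * (r', s') = (r * r', s * s') := rfl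
    rw [this, Ideal.mem_prod]
    exact ⟨Ideal.mul_mem_mul hr.1 hr'.1, Ideal.mul_mem_mul hr.2 hr'.2⟩
  · rintro ⟨x, y⟩ hxy
    rw [Ideal.mem_prod] at hxy
    obtain ⟨hx, hy⟩ := hxy
    have key1 : ((x, 0) : S × T) ∈ Ideal.prod I J * Ideal.prod I' J' := by
      refine Submodule.mul_induction_on (C := fun z => ((z, 0) : S × T) ∈ Ideal.prod I J * Ideal.prod I' J') hx ?_ ?_
      · intro a haI b hbI'
        have h1 : ((a, 0) : S × T) ∈ Ideal.prod I J := (Ideal.mem_prod _ _).mpr ⟨haI, J.zero_mem⟩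
        have h2 : ((b, 0) : S × T) ∈ Ideal.prod I' J' := (Ideal.mem_prod _ _).mpr ⟨hbI', J'.zero_mem⟩
        have := Ideal.mul_mem_mul h1 h2
        simpa using this
      · intro w z hw hz
        have := Ideal.add_mem _ hw hz
        simpa using this
    have key2 : ((0, y) : S × T) ∈ Ideal.prod I J * Ideal.prod I' J' := by
      refine Submodule.mul_induction_on (C := fun z => ((0, z) : S × T) ∈ Ideal.prod I J * Ideal.prod I' J') hy ?_ ?_
      · intro a haJ b hbJ'
        have h1 : ((0, a) : S × T) ∈ Ideal.prod I J := (Ideal.mem_prod _ _).mpr ⟨I.zero_mem, haJ⟩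
        have h2 : ((0, b) : S × T) ∈ Ideal.prod I' J' := (Ideal.mem_prod _ _).mpr ⟨I'.zero_mem, hbJ'⟩
        have := Ideal.mul_mem_mul h1 h2
        simpa using this
      · intro w z hw hz
        have := Ideal.add_mem _ hw hz
        simpa using this
    have := Ideal.add_mem _ key1 key2
    simpa using this

lemma ideal_prod_finprod {ι : Type*} (s : Finset ι) (A : ι → Ideal S) (B : ι → Ideal T) :
    (∏ i ∈ s, Ideal.prod (A i) (B i)) = Ideal.prod (∏ i ∈ s, A i) (∏ i ∈ s, B i) := by
  classical
  induction s using Finset.induction_on with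
  | empty => simp [Ideal.one_eq_top]
  | insert _ _ h ih =>
    rw [Finset.prod_insert h, Finset.prod_insert h, Finset.prod_insert h, ih,
      ideal_prod_mul_prod]

lemma isGeneralZPIRing_prod (hS : IsGeneralZPIRing S) (hT : IsGeneralZPIRing T) :
    IsGeneralZPIRing (S × T) := by
  intro K hK
  set I := Ideal.map (RingHom.fst S T) K with hIdef
  set J := Ideal.map (RingHom.snd S T) K with hJdef
  have hKe : K = Ideal.prod I J := Ideal.ideal_prod_eq K
  have hIJ : ¬(I = ⊤ ∧ J = ⊤) := by
    rintro ⟨h1, h2⟩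
    exact hK (by rw [hKe, h1, h2, Ideal.prod_top_top])
  by_cases hI : I = ⊤
  · have hJ : J ≠ ⊤ := fun h => hIJ ⟨hI, h⟩
    obtain ⟨t, Q, ht, hQ, hQf⟩ := hT J hJ
    refine ⟨t, fun k => Ideal.prod (⊤ : Ideal S) (Q k), ht, fun k => ?_, ?_⟩
    · haveI := hQ k
      exact Ideal.isPrime_ideal_prod_top'
    · rw [hKe, hI, hQf, ideal_prod_finprod]
      congr 1
      rw [← Ideal.one_eq_top]
      exact (Finset.prod_const_one).symm
  by_cases hJ : J = ⊤
  · obtain ⟨t, Q, ht, hQ, hQf⟩ := hS I hI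
    refine ⟨t, fun k => Ideal.prod (Q k) (⊤ : Ideal T), ht, fun k => ?_, ?_⟩
    · haveI := hQ k
      exact Ideal.isPrime_ideal_prod_top
    · rw [hKe, hJ, hQf, ideal_prod_finprod]
      congr 1
      rw [← Ideal.one_eq_top]
      exact (Finset.prod_const_one).symm
  · obtain ⟨s', Pf, hs', hPf, hPff⟩ := hS I hI
    obtain ⟨t, Q, ht, hQ, hQf⟩ := hT J hJ
    refine ⟨s' + t,
      Fin.append (fun k => Ideal.prod (Pf k) (⊤ : Ideal T))
        (fun k => Ideal.prod (⊤ : Ideal S) (Q k)), by omega, ?_, ?_⟩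
    · intro i
      refine Fin.addCases ?_ ?_ i
      · intro k
        rw [Fin.append_left]
        haveI := hPf k
        exact Ideal.isPrime_ideal_prod_top
      · intro k
        rw [Fin.append_right]
        haveI := hQ k
        exact Ideal.isPrime_ideal_prod_top'
    · rw [Fin.prod_univ_add]
      simp only [Fin.append_left, Fin.append_right]
      rw [ideal_prod_finprod, ideal_prod_finprod, ideal_prod_mul_prod]
      have e1 : (∏ _i : Fin t, (⊤ : Ideal S)) = ⊤ := by
        rw [← Ideal.one_eq_top]; exact Finset.prod_const_one
      have e2 : (∏ _i : Fin s', (⊤ : Ideal T)) = ⊤ := by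
        rw [← Ideal.one_eq_top]; exact Finset.prod_const_one
      rw [e1, e2, Ideal.mul_top, Ideal.top_mul, hKe, hPff, hQf]

end ProdRing
section PiRing

universe v

def ringEquivPiSucc {m : ℕ} (G : Fin (m + 1) → Type v) [∀ i, CommRing (G i)] :
    ((i : Fin (m + 1)) → G i) ≃+* G 0 × ((i : Fin m) → G i.succ) where
  toFun f := (f 0, fun i => f i.succ)
  invFun p := Fin.cons p.1 p.2
  left_inv f := by
    funext i
    refine Fin.cases ?_ ?_ i
    · simp
    · intro j
      simp
  right_inv p := by
    refine Prod.ext ?_ ?_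
    · simp
    · funext j
      simp
  map_mul' f g := rfl
  map_add' f g := rfl

lemma isGeneralZPIRing_pi : ∀ (m : ℕ) (G : Fin m → Type v) (_ : ∀ i, CommRing (G i)),
    (∀ i, IsGeneralZPIRing (G i)) → IsGeneralZPIRing ((i : Fin m) → G i) := by
  intro m
  induction m with
  | zero =>
    intro G _ _ I hI
    exfalso
    apply hI
    rw [Ideal.eq_top_iff_one]
    have h0 : (1 : (i : Fin 0) → G i) = 0 := Subsingleton.elim _ _
    rw [h0]
    exact I.zero_mem
  | succ m ih =>
    intro G _ hG
    exact isGeneralZPIRing_of_equiv (ringEquivPiSucc G)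
      (isGeneralZPIRing_prod (hG 0) (ih _ _ fun i => hG i.succ))

noncomputable def polyPiEquiv {m : ℕ} (G : Fin m → Type v) [∀ i, CommRing (G i)] :
    (Polynomial ((i : Fin m) → G i)) ≃+* ((i : Fin m) → Polynomial (G i)) := by
  refine RingEquiv.ofBijective
    (Pi.ringHom fun i => Polynomial.mapRingHom (Pi.evalRingHom G i)) ⟨?_, ?_⟩
  · intro f g hfg
    ext k i
    have h1 := congrArg (fun q => Polynomial.coeff q k) (congrFun hfg i)
    simpa [Pi.ringHom, RingHom.pi_apply, Polynomial.coeff_map] using h1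
  · intro g
    classical
    set N := Finset.univ.sup fun i => (g i).natDegree with hN
    refine ⟨∑ k ∈ Finset.range (N + 1), Polynomial.C (fun i => (g i).coeff k) *
      Polynomial.X ^ k, ?_⟩
    funext i
    ext k
    show (Polynomial.map (Pi.evalRingHom G i) _).coeff k = (g i).coeff k
    rw [Polynomial.coeff_map]
    have hc : (∑ j ∈ Finset.range (N + 1), Polynomial.C (fun i => (g i).coeff j) *
        Polynomial.X ^ j).coeff k
        = if k ∈ Finset.range (N + 1) then (fun i => (g i).coeff k) else 0 := by
      rw [Polynomial.finset_sum_coeff]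
      simp only [Polynomial.coeff_C_mul, Polynomial.coeff_X_pow, mul_ite, mul_one, mul_zero]
      exact Finset.sum_ite_eq (Finset.range (N + 1)) k _
    rw [hc]
    by_cases hk : k ∈ Finset.range (N + 1)
    · rw [if_pos hk]
      rfl
    · rw [if_neg hk]
      have hdeg : (g i).natDegree < k := by
        have h1 : (g i).natDegree ≤ N := Finset.le_sup (f := fun i => (g i).natDegree) (Finset.mem_univ i)
        rw [Finset.mem_range, not_lt] at hk
        omega
      rw [Polynomial.coeff_eq_zero_of_natDegree_lt hdeg]
      rfl

end PiRing
section Main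

lemma not_isUnit_one_sub_X {R : Type*} [CommRing R] [Nontrivial R] :
    ¬IsUnit ((1 : Polynomial R) - X) := by
  intro h
  have h2 := h.map (Polynomial.evalRingHom (1 : R))
  have h3 : (Polynomial.evalRingHom (1 : R)) ((1 : Polynomial R) - X) = 0 := by simp
  rw [h3] at h2
  exact not_isUnit_zero h2

theorem stmt14 {R : Type u} [CommRing R] [Nontrivial R] (n : ℕ) (hn : 0 < n) :
    IsNOAFRing (Polynomial R) n ↔
      ∃ (m : ℕ) (F : Fin m → Type u) (_ : ∀ i, Field (F i)),
        Nonempty (R ≃+* ((i : Fin m) → F i)) := by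
  constructor
  · intro h
    apply forward_main
    intro I hI
    obtain ⟨m, J, hm, hJ, hfac⟩ := h I hI
    refine ⟨m, J, hm, fun i => ?_, hfac⟩
    exact (hJ i).isPrime_of_witness hn Polynomial.not_isUnit_X not_isUnit_one_sub_X
      (by ring)
  · rintro ⟨m, F, hF, ⟨e⟩⟩
    letI : ∀ i, Field (F i) := hF
    have h1 : ∀ i, IsGeneralZPIRing (Polynomial (F i)) := fun i => isGeneralZPIRing_of_pid _
    have h2 : IsGeneralZPIRing ((i : Fin m) → Polynomial (F i)) :=
      isGeneralZPIRing_pi m _ (fun _ => inferInstance) h1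
    have h3 : IsGeneralZPIRing (Polynomial ((i : Fin m) → F i)) :=
      isGeneralZPIRing_of_equiv (polyPiEquiv F) h2
    have h4 : IsGeneralZPIRing (Polynomial R) :=
      isGeneralZPIRing_of_equiv (Polynomial.mapEquiv e) h3
    exact h4.isNOAFRing n

end Main
end

section
/- Let R be a commutative ring and M a maximal ideal of R. The ideal M + X·R[[X]] of the power series ring R[[X]] is a simple ideal if and only if M² = M. -/
open PowerSeries

lemma coeff_one_mul'_s15 {R : Type*} [CommRing R] (f g : PowerSeries R) :
    coeff 1 (f*g) = constantCoeff (R := R) f * coeff 1 g + coeff 1 f * constantCoeff (R := R) g := by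
  rw [coeff_mul, show Finset.HasAntidiagonal.antidiagonal 1 = {(0,1),(1,0)} from rfl]
  simp [coeff_zero_eq_constantCoeff]

/-- The ideal of power series whose first two coefficients lie in `M`. -/
def Kid {R : Type*} [CommRing R] (M : Ideal R) : Ideal (PowerSeries R) where
  carrier := {f | constantCoeff (R := R) f ∈ M ∧ coeff 1 f ∈ M}
  add_mem' := by
    rintro a b ⟨h0, h1⟩ ⟨g0, g1⟩
    exact ⟨by rw [map_add]; exact Ideal.add_mem M h0 g0,
           by rw [map_add]; exact Ideal.add_mem M h1 g1⟩
  zero_mem' := by simp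
  smul_mem' := by
    rintro c f ⟨h0, h1⟩
    refine ⟨?_, ?_⟩
    · simp only [smul_eq_mul, map_mul]; exact Ideal.mul_mem_left M _ h0
    · simp only [smul_eq_mul, coeff_one_mul'_s15]
      exact Ideal.add_mem M (Ideal.mul_mem_left M _ h1) (Ideal.mul_mem_left M _ h0)

lemma mem_Kid {R : Type*} [CommRing R] (M : Ideal R) (f : PowerSeries R) :
    f ∈ Kid M ↔ constantCoeff (R := R) f ∈ M ∧ coeff 1 f ∈ M := Iff.rfl

theorem stmt15 {R : Type*} [CommRing R] [Nontrivial R] (M : Ideal R) (hM : M.IsMaximal) :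
    (∀ J : Ideal (PowerSeries R),
        (M.comap (PowerSeries.constantCoeff (R := R))) ^ 2 ≤ J →
        J ≤ M.comap (PowerSeries.constantCoeff (R := R)) →
        J = (M.comap (PowerSeries.constantCoeff (R := R))) ^ 2 ∨
          J = M.comap (PowerSeries.constantCoeff (R := R))) ↔
      M ^ 2 = M := by
  set Cid : Ideal (PowerSeries R) := M.comap (constantCoeff (R := R)) with hCid
  -- basic facts
  have hC2K : Cid ^ 2 ≤ Kid M := by
    rw [pow_two, Ideal.mul_le]
    intro f hf g hg
    have hf' : constantCoeff (R := R) f ∈ M := hf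
    have hg' : constantCoeff (R := R) g ∈ M := hg
    refine ⟨?_, ?_⟩
    · rw [map_mul]; exact Ideal.mul_mem_right _ M hf'
    · rw [coeff_one_mul'_s15]
      exact Ideal.add_mem M (Ideal.mul_mem_right _ M hf') (Ideal.mul_mem_left M _ hg')
  have hKC : Kid M ≤ Cid := fun f hf => hf.1
  have hXC : (X : PowerSeries R) ∈ Cid := by
    simp [hCid, Ideal.mem_comap]
  have hXK : (X : PowerSeries R) ∉ Kid M := by
    intro h
    exact hM.ne_top (Ideal.eq_top_of_isUnit_mem M (by simpa using h.2) isUnit_one)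
  have hCmem : ∀ a : R, a ∈ M → PowerSeries.C (R := R) a ∈ Cid := fun a ha => by
    simp [hCid, Ideal.mem_comap, ha]
  have hC2mem : ∀ a : R, a ∈ M ^ 2 → PowerSeries.C (R := R) a ∈ Cid ^ 2 := by
    intro a ha
    have h1 : Ideal.map (PowerSeries.C (R := R)) M ≤ Cid := by
      rw [Ideal.map_le_iff_le_comap]
      intro x hx
      simpa [hCid, Ideal.mem_comap] using hx
    have : PowerSeries.C (R := R) a ∈ Ideal.map (PowerSeries.C (R := R)) (M ^ 2) :=
      Ideal.mem_map_of_mem _ ha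
    rw [Ideal.map_pow] at this
    exact Ideal.pow_right_mono h1 2 this
  constructor
  · -- simple → M² = M
    intro hsimple
    refine le_antisymm (Ideal.pow_le_self two_ne_zero) ?_
    have hK : Kid M = Cid ^ 2 := by
      rcases hsimple (Kid M) hC2K hKC with h | h
      · exact h
      · exact absurd (h ▸ hXC) hXK
    intro m hm
    have hmK : PowerSeries.C (R := R) m ∈ Kid M := by
      refine ⟨by simpa using hm, by simp⟩
    rw [hK] at hmK
    have : m ∈ Ideal.map (constantCoeff (R := R)) (Cid ^ 2) := by
      simpa using Ideal.mem_map_of_mem (constantCoeff (R := R)) hmK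
    rw [Ideal.map_pow] at this
    exact Ideal.pow_right_mono Ideal.map_comap_le 2 this
  · -- M² = M → simple
    intro h2 J hJ1 hJ2
    -- First: Kid M ≤ Cid ^ 2 (so Kid M = Cid ^ 2)
    have hX2 : (X : PowerSeries R) ^ 2 ∈ Cid ^ 2 := Ideal.pow_mem_pow hXC 2
    have hKC2 : Kid M ≤ Cid ^ 2 := by
      rintro g ⟨g0, g1⟩
      have hd : g - PowerSeries.C (R := R) (constantCoeff (R := R) g)
          - PowerSeries.C (R := R) (coeff 1 g) * X ∈ Cid ^ 2 := by
        have hdvd : (X : PowerSeries R) ^ 2 ∣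
            g - PowerSeries.C (R := R) (constantCoeff (R := R) g) - PowerSeries.C (R := R) (coeff 1 g) * X := by
          rw [X_pow_dvd_iff]
          intro i hi
          interval_cases i <;> simp [coeff_one_mul'_s15]
        obtain ⟨t, ht⟩ := hdvd
        rw [ht]
        exact Ideal.mul_mem_right _ _ hX2
      have h0 : PowerSeries.C (R := R) (constantCoeff (R := R) g) ∈ Cid ^ 2 :=
        hC2mem _ (by rw [h2]; exact g0)
      have h1 : PowerSeries.C (R := R) (coeff 1 g) * X ∈ Cid ^ 2 :=
        Ideal.mul_mem_right _ _ (hC2mem _ (by rw [h2]; exact g1))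
      have := Ideal.add_mem _ (Ideal.add_mem _ hd h1) h0
      convert this using 1
      ring
    by_cases hJK : J ≤ Kid M
    · left
      exact le_antisymm (le_trans hJK hKC2) hJ1
    · right
      obtain ⟨f, hfJ, hfK⟩ := Set.not_subset.mp hJK
      have hf0 : constantCoeff (R := R) f ∈ M := hJ2 hfJ
      have hf1 : coeff 1 f ∉ M := fun h => hfK ⟨hf0, h⟩
      obtain ⟨s, m, hmM, hsm⟩ := hM.exists_inv hf1
      -- X ∈ J
      have hKJ : Kid M ≤ J := le_trans hKC2 hJ1
      have hgK : PowerSeries.C (R := R) s * f - PowerSeries.C (R := R) (1 - m) * X ∈ Kid M := by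
        refine ⟨?_, ?_⟩
        · simp only [map_sub, map_mul, constantCoeff_C, constantCoeff_X, mul_zero, sub_zero]
          exact Ideal.mul_mem_left M _ hf0
        · simp only [map_sub, coeff_one_mul'_s15, constantCoeff_C, coeff_one_X, constantCoeff_X,
            mul_one, mul_zero, add_zero, zero_add]
          have : s * coeff 1 f - (1 - m) = 0 := by
            rw [← hsm]; ring
          simp [coeff_C, this]
      have h1mX : PowerSeries.C (R := R) (1 - m) * X ∈ J := by
        have hsf : PowerSeries.C (R := R) s * f ∈ J := Ideal.mul_mem_left J _ hfJ
        have := Ideal.sub_mem J hsf (hKJ hgK)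
        simpa using this
      have hmX : PowerSeries.C (R := R) m * X ∈ J := by
        refine hKJ ⟨?_, ?_⟩ <;> simp [coeff_one_mul'_s15, hmM]
      have hXJ : (X : PowerSeries R) ∈ J := by
        have := Ideal.add_mem J h1mX hmX
        have heq : PowerSeries.C (R := R) (1 - m) * X + PowerSeries.C (R := R) m * X = X := by
          rw [← add_mul, ← map_add]
          simp
        rwa [heq] at this
      refine le_antisymm hJ2 ?_
      intro h hh
      have hh0 : constantCoeff (R := R) h ∈ M := hh
      have htail : h - PowerSeries.C (R := R) (constantCoeff (R := R) h) ∈ J := by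
        obtain ⟨t, ht⟩ := X_dvd_iff.mpr (by simp : constantCoeff (R := R)
          (h - PowerSeries.C (R := R) (constantCoeff (R := R) h)) = 0)
        rw [ht]
        exact Ideal.mul_mem_right _ J hXJ
      have hconst : PowerSeries.C (R := R) (constantCoeff (R := R) h) ∈ J :=
        hKJ ⟨by simpa using hh0, by simp⟩
      have := Ideal.add_mem J htail hconst
      simpa using this
end

section
/- For a commutative ring R and positive integer n, the formal power series ring R[[X]] is an n-OAF ring if and only if R is isomorphic to a finite direct product of fields. -/
set_option linter.unusedSectionVars false
set_option maxHeartbeats 1000000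

namespace NOAAux

section P1


variable {S : Type*} [CommRing S] {n : ℕ} {K : Ideal S}

theorem noa_step (hK : IsNOAIdeal n K) (g : Fin n → S) (c : S)
    (hg : ∀ i, ¬IsUnit (g i)) (hc : ¬IsUnit c) (h : (∏ i, g i) * c ∈ K) :
    (∏ i, g i) ∈ K ∨ c ∈ K := by
  set a : Fin (n + 1) → S := Fin.snoc g c with hadef
  have ha : ∀ i, ¬IsUnit (a i) := by
    intro i
    induction i using Fin.lastCases with
    | last => simpa [hadef] using hc
    | cast j => simpa [hadef] using hg j
  have hmem : (∏ i, a i) ∈ K := by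
    rw [Fin.prod_univ_castSucc]
    simpa [hadef] using h
  have := hK.2 a ha hmem
  simpa [hadef] using this

theorem noa_prod (hK : IsNOAIdeal n K) (hn : 0 < n) {a b : S}
    (ha : ¬IsUnit a) (hb : ¬IsUnit b) (hab : a * b ∈ K) (haK : a ∉ K) (hbK : b ∉ K)
    (x : Fin n → S) (hx : ∀ i, ¬IsUnit (x i)) : (∏ i, x i) ∈ K := by
  set i0 : Fin n := ⟨n - 1, by omega⟩ with hi0
  set g' := Function.update x i0 (x i0 * a) with hg'def
  have hg' : ∀ i, ¬IsUnit (g' i) := by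
    intro i
    by_cases h : i = i0
    · subst h
      simp only [hg'def, Function.update_self]
      intro hu
      exact hx i0 (isUnit_of_mul_isUnit_left hu)
    · simpa [hg'def, Function.update_of_ne h] using hx i
  have hprod : (∏ i, g' i) = (∏ i, x i) * a := by
    rw [hg'def, Finset.prod_update_of_mem (Finset.mem_univ i0),
      ← Finset.mul_prod_erase Finset.univ x (Finset.mem_univ i0), mul_right_comm,
      Finset.erase_eq]
  have h1 : (∏ i, g' i) * b ∈ K := by
    rw [hprod, mul_assoc]
    exact Ideal.mul_mem_left _ _ hab
  rcases noa_step hK g' b hg' hb h1 with h | h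
  · rw [hprod] at h
    rcases noa_step hK x a hx ha h with h2 | h2
    · exact h2
    · exact absurd h2 haK
  · exact absurd h hbK

theorem noa_isPrime (hK : IsNOAIdeal n K) (hn : 0 < n) {u v : S}
    (hu : ¬IsUnit u) (hv : ¬IsUnit v) (huv : u + v = 1) : K.IsPrime := by
  refine ⟨hK.1, ?_⟩
  intro x y hxy
  by_cases hx : IsUnit x
  · right
    obtain ⟨xu, rfl⟩ := hx
    have : (y : S) = ↑xu⁻¹ * (↑xu * y) := by rw [← mul_assoc, Units.inv_mul, one_mul]
    rw [this]
    exact Ideal.mul_mem_left _ _ hxy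
  by_cases hy : IsUnit y
  · left
    obtain ⟨yu, rfl⟩ := hy
    have : (x : S) = ↑yu⁻¹ * (x * ↑yu) := by rw [mul_comm x, ← mul_assoc, Units.inv_mul, one_mul]
    rw [this]
    exact Ideal.mul_mem_left _ _ hxy
  by_contra hcon
  push_neg at hcon
  have hall := noa_prod hK hn hx hy hxy hcon.1 hcon.2
  have hun : u ^ n ∈ K := by
    have := hall (fun _ => u) (fun _ => hu)
    simpa using this
  have hvn : v ^ n ∈ K := by
    have := hall (fun _ => v) (fun _ => hv)
    simpa using this
  have h1 : (u + v) ^ (2 * n - 1) ∈ K := by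
    rw [add_pow]
    refine Ideal.sum_mem _ ?_
    intro k hk
    simp only [Finset.mem_range] at hk
    by_cases hkn : n ≤ k
    · have : u ^ k = u ^ n * u ^ (k - n) := by rw [← pow_add]; congr 1; omega
      rw [this, mul_assoc, mul_assoc]
      exact Ideal.mul_mem_right _ _ hun
    · have hdvd : v ^ n ∣ u ^ k * v ^ (2 * n - 1 - k) * ((2 * n - 1).choose k : S) :=
        ((pow_dvd_pow v (by omega)).trans (dvd_mul_left _ _)).mul_right _
      obtain ⟨c, hc⟩ := hdvd
      rw [hc]
      exact Ideal.mul_mem_right _ _ hvn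
  rw [huv, one_pow] at h1
  exact hK.1 (K.eq_top_of_isUnit_mem h1 isUnit_one)

/-- If all products of `n` elements of `p` lie in `a`, then `p ^ n ≤ a`. -/
theorem pow_le_of_prod_mem {p a : Ideal S}
    (h : ∀ x : Fin n → S, (∀ i, x i ∈ p) → (∏ i, x i) ∈ a) : p ^ n ≤ a := by
  have aux : ∀ k j, k + j = n → ∀ y ∈ p ^ k, ∀ x : Fin j → S,
      (∀ i, x i ∈ p) → y * ∏ i, x i ∈ a := by
    intro k
    induction k with
    | zero =>
      intro j hj y _ x hx
      have hj' : j = n := by omega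
      subst hj'
      exact Ideal.mul_mem_left _ _ (h x hx)
    | succ k ih =>
      intro j hj y hy x hx
      rw [pow_succ] at hy
      refine Submodule.mul_induction_on hy ?_ ?_
      · intro z hz w hw
        have := ih (j + 1) (by omega) z hz (Fin.cons w x)
          (by
            intro i
            refine Fin.cases ?_ ?_ i
            · simpa using hw
            · intro j'; simpa using hx j')
        rw [Fin.prod_univ_succ] at this
        simpa [mul_assoc] using this
      · intro z w hz hw
        rw [add_mul]
        exact Ideal.add_mem _ hz hw
  intro y hy
  have := aux n 0 (by omega) y hy (fun i => i.elim0) (fun i => i.elim0)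
  simpa using this

theorem prod_le_factor {t : ℕ} (K : Fin t → Ideal S) (j : Fin t) : (∏ i, K i) ≤ K j := by
  rw [← Finset.mul_prod_erase Finset.univ K (Finset.mem_univ j)]
  exact Ideal.mul_le_left

theorem finset_prod_le {ι : Type*} (s : Finset ι) (K : ι → Ideal S) {j : ι} (hj : j ∈ s) :
    (∏ i ∈ s, K i) ≤ K j := by
  classical
  rw [← Finset.mul_prod_erase s K hj]
  exact Ideal.mul_le_left

theorem prod_le_pair {t : ℕ} (K : Fin t → Ideal S) {i j : Fin t} (hij : i ≠ j) :
    (∏ l, K l) ≤ K i * K j := by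
  rw [← Finset.mul_prod_erase Finset.univ K (Finset.mem_univ i)]
  exact Ideal.mul_mono le_rfl
    (finset_prod_le _ K (Finset.mem_erase.mpr ⟨hij.symm, Finset.mem_univ j⟩))

theorem prod_le_prod {t : ℕ} (A B : Fin t → Ideal S) (h : ∀ j, A j ≤ B j) :
    (∏ i, A i) ≤ ∏ i, B i := by
  induction t with
  | zero => simp
  | succ t ih =>
    rw [Fin.prod_univ_castSucc, Fin.prod_univ_castSucc]
    exact Ideal.mul_mono (ih _ _ fun j => h _) (h _)

theorem map_finprod {T : Type*} [CommRing T] (f : S →+* T) {t : ℕ} (K : Fin t → Ideal S) :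
    Ideal.map f (∏ i, K i) = ∏ i, (K i).map f := by
  induction t with
  | zero => simp [Ideal.one_eq_top, Ideal.map_top]
  | succ t ih =>
    rw [Fin.prod_univ_castSucc, Fin.prod_univ_castSucc, Ideal.map_mul, ih]

theorem mem_prod_of_pairwise {t : ℕ} (P : Fin t → Ideal S)
    (hco : ∀ i j, i ≠ j → P i ⊔ P j = ⊤) (x : S) (hx : ∀ i, x ∈ P i) :
    x ∈ ∏ i, P i := by
  induction t with
  | zero => rw [Fin.prod_univ_zero, Ideal.one_eq_top]; exact Submodule.mem_top
  | succ t ih =>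
    rw [Fin.prod_univ_castSucc]
    have hA : x ∈ ∏ i : Fin t, P i.castSucc :=
      ih _ (fun i j hij => hco _ _ (fun h => hij (Fin.castSucc_injective _ h))) (fun i => hx _)
    have hAB : P (Fin.last t) ⊔ (∏ i : Fin t, P i.castSucc) = ⊤ :=
      Ideal.sup_prod_eq_top (fun i _ => hco _ _ (Fin.castSucc_lt_last i).ne')
    rw [sup_comm] at hAB
    have h1 : (1 : S) ∈ (∏ i : Fin t, P i.castSucc) ⊔ P (Fin.last t) := by
      rw [hAB]; exact Submodule.mem_top
    obtain ⟨α, hα, β, hβ, hsum⟩ := Submodule.mem_sup.mp h1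
    have hx2 : x = α * x + β * x := by rw [← add_mul, hsum, one_mul]
    rw [hx2]
    refine Ideal.add_mem _ (Ideal.mul_mem_mul hα (hx _)) ?_
    rw [mul_comm β x]
    exact Ideal.mul_mem_mul hA hβ



end P1

section P2


variable {S : Type*} [CommRing S] {n : ℕ} {K : Ideal S}

/-- Witnesses for non-primality of a proper ideal are nonunits. -/
theorem exists_witness (hKT : K ≠ ⊤) (hp : ¬K.IsPrime) :
    ∃ f g : S, ¬IsUnit f ∧ ¬IsUnit g ∧ f * g ∈ K ∧ f ∉ K ∧ g ∉ K := by
  have hnp : ∃ f g : S, f * g ∈ K ∧ f ∉ K ∧ g ∉ K := by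
    by_contra hcon
    push_neg at hcon
    exact hp ⟨hKT, fun {x y} hxy =>
      Classical.byCases Or.inl (fun hx => Or.inr (hcon _ _ hxy hx))⟩
  obtain ⟨f, g, hfg, hf, hg⟩ := hnp
  have hfu : ¬IsUnit f := by
    intro hu
    obtain ⟨u, rfl⟩ := hu
    apply hg
    have : (g : S) = ↑u⁻¹ * (↑u * g) := by rw [← mul_assoc, Units.inv_mul, one_mul]
    rw [this]
    exact Ideal.mul_mem_left _ _ hfg
  have hgu : ¬IsUnit g := by
    intro hu
    obtain ⟨u, rfl⟩ := hu
    apply hf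
    have : (f : S) = ↑u⁻¹ * (f * ↑u) := by rw [mul_comm f, ← mul_assoc, Units.inv_mul, one_mul]
    rw [this]
    exact Ideal.mul_mem_left _ _ hfg
  exact ⟨f, g, hfu, hgu, hfg, hf, hg⟩

/-- A non-prime `n`-OA ideal contains `M ^ n` for any ideal `M` consisting of nonunits. -/
theorem nonprime_noa_pow (hK : IsNOAIdeal n K) (hn : 0 < n) (hp : ¬K.IsPrime)
    {M : Ideal S} (hM : ∀ x ∈ M, ¬IsUnit x) : M ^ n ≤ K := by
  obtain ⟨f, g, hfu, hgu, hfg, hf, hg⟩ := exists_witness hK.1 hp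
  exact pow_le_of_prod_mem fun x hx =>
    noa_prod hK hn hfu hgu hfg hf hg x fun i => hM _ (hx i)

section Forward

open PowerSeries

variable {R : Type*} [CommRing R] [Nontrivial R]

theorem coeff_bound (p : Ideal R) :
    ∀ (k : ℕ) (f : PowerSeries R), f ∈ (Ideal.comap (constantCoeff) p) ^ k →
      (constantCoeff) f ∈ p ^ k ∧ (coeff 1) f ∈ p ^ (k - 1) := by
  intro k
  induction k with
  | zero =>
    intro f _
    constructor <;> simp [Ideal.one_eq_top]
  | succ k ih =>
    intro f hf
    rw [pow_succ] at hf
    refine Submodule.mul_induction_on hf ?_ ?_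
    · intro g hg h hh
      have hg' := ih g hg
      have hh' : constantCoeff h ∈ p := Ideal.mem_comap.mp hh
      have hco : (coeff 1) (g * h) =
          (constantCoeff) g * (coeff 1) h + (coeff 1) g * (constantCoeff) h := by
        rw [coeff_mul, Finset.Nat.sum_antidiagonal_eq_sum_range_succ_mk]
        simp [Finset.sum_range_succ, coeff_zero_eq_constantCoeff]
      constructor
      · rw [map_mul, pow_succ]
        exact Ideal.mul_mem_mul hg'.1 hh'
      · rw [hco]
        rcases k with _ | k'
        · simp [Ideal.one_eq_top]
        · simp only [Nat.succ_sub_one] at hg' ⊢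
          refine Ideal.add_mem _ ?_ ?_
          · exact Ideal.mul_mem_right _ _ hg'.1
          · have := Ideal.mul_mem_mul hg'.2 hh'
            rwa [← pow_succ] at this
    · intro g h hg hh
      constructor
      · rw [map_add]; exact Ideal.add_mem _ hg.1 hh.1
      · rw [map_add]; exact Ideal.add_mem _ hg.2 hh.2

variable [IsLocalRing R]

theorem caseA_prime_or_pow (hn : 0 < n) (hnoaf : IsNOAFRing (PowerSeries R) n)
    (a : Ideal R) (ha : a ≠ ⊤) :
    a.IsPrime ∨ (IsLocalRing.maximalIdeal R) ^ n ≤ a := by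
  set p := IsLocalRing.maximalIdeal R with hpdef
  set M : Ideal (PowerSeries R) := Ideal.comap (constantCoeff) p with hMdef
  set I : Ideal (PowerSeries R) := Ideal.comap (constantCoeff) a with hIdef
  have hI : I ≠ ⊤ := by
    intro h
    apply ha
    rw [Ideal.eq_top_iff_one] at h ⊢
    simpa [hIdef] using h
  obtain ⟨m, K, hm, hK, hIK⟩ := hnoaf I hI
  have hMnon : ∀ x ∈ M, ¬IsUnit x := by
    intro x hx hu
    have := isUnit_iff_constantCoeff.mp hu
    exact (IsLocalRing.mem_maximalIdeal _).mp (Ideal.mem_comap.mp hx) this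
  have hKM : ∀ j, K j ≤ M := by
    intro j x hx
    have hxu : ¬IsUnit x := fun hu => (hK j).1 (Ideal.eq_top_of_isUnit_mem _ hx hu)
    have hcu : ¬IsUnit (constantCoeff x) := fun hu => hxu (isUnit_iff_constantCoeff.mpr hu)
    exact Ideal.mem_comap.mpr ((IsLocalRing.mem_maximalIdeal _).mpr hcu)
  have hXI : (X : PowerSeries R) ∈ I := Ideal.mem_comap.mpr (by simp)
  have hIM : I ≤ M ^ m := by
    rw [hIK]
    refine le_trans (prod_le_prod K (fun _ => M) hKM) ?_
    simp [Finset.prod_const]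
  have hc1 : (1 : R) ∈ p ^ (m - 1) := by
    have := (coeff_bound p m X (hIM hXI)).2
    rwa [coeff_one_X] at this
  have hm1 : m = 1 := by
    by_contra hne
    have hle : p ^ (m - 1) ≤ p := Ideal.pow_le_self (by omega)
    exact (IsLocalRing.maximalIdeal.isMaximal R).ne_top
      (Ideal.eq_top_of_isUnit_mem _ (hle hc1) isUnit_one)
  subst hm1
  rw [Fin.prod_univ_one] at hIK
  by_cases hp : I.IsPrime
  · left
    refine ⟨ha, ?_⟩
    intro x y hxy
    have hmem : (C x) * (C y) ∈ I := Ideal.mem_comap.mpr (by simpa using hxy)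
    rcases hp.mem_or_mem hmem with h | h
    · left; simpa using Ideal.mem_comap.mp h
    · right; simpa using Ideal.mem_comap.mp h
  · right
    have hKI : IsNOAIdeal n I := by rw [hIK]; exact hK 0
    have hMn : M ^ n ≤ I := nonprime_noa_pow hKI hn hp hMnon
    intro r hr
    have hmem : (C r) ∈ Ideal.map (C) (p ^ n) := Ideal.mem_map_of_mem _ hr
    have hmap : Ideal.map (C) (p ^ n) ≤ M ^ n := by
      rw [Ideal.map_pow]
      refine Ideal.pow_right_mono ?_ n
      rw [Ideal.map_le_iff_le_comap]
      intro z hz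
      exact Ideal.mem_comap.mpr (by simpa [hMdef] using hz)
    have : (C r) ∈ I := hMn (hmap hmem)
    simpa using Ideal.mem_comap.mp this

theorem caseA_pow_eq_bot (hn : 0 < n) (hnoaf : IsNOAFRing (PowerSeries R) n) :
    (IsLocalRing.maximalIdeal R) ^ n = ⊥ := by
  set p := IsLocalRing.maximalIdeal R with hpdef
  refine (Submodule.eq_bot_iff _).mpr ?_
  intro z hz
  by_contra hz0
  set a := Ideal.span {z} * p with hadef
  have haT : a ≠ ⊤ := by
    intro h
    exact (IsLocalRing.maximalIdeal.isMaximal R).ne_top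
      (top_le_iff.mp (h ▸ Ideal.mul_le_right))
  have hz_p : z ∈ p := Ideal.pow_le_self hn.ne' hz
  have hza : z ∈ a := by
    rcases caseA_prime_or_pow hn hnoaf a haT with hP | hP
    · rcases hP.mul_le.mp le_rfl with h | h
      · exact h (Ideal.subset_span rfl)
      · exact h hz_p
    · exact hP hz
  obtain ⟨w, hw, hzw⟩ := Ideal.mem_span_singleton_mul.mp hza
  have h0 : z * (1 - w) = 0 := by rw [mul_sub, mul_one, hzw, sub_self]
  have hwu : IsUnit (1 - w) := by
    by_contra hu
    have h1 : (1 : R) - w ∈ p := (IsLocalRing.mem_maximalIdeal _).mpr hu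
    have h2 : (1 : R) ∈ p := by
      have := Ideal.add_mem p h1 hw
      simpa using this
    exact (IsLocalRing.maximalIdeal.isMaximal R).ne_top
      (Ideal.eq_top_of_isUnit_mem _ h2 isUnit_one)
  obtain ⟨u, hu⟩ := hwu
  apply hz0
  have : z = z * (1 - w) * ↑u⁻¹ := by rw [← hu, mul_assoc, Units.mul_inv, mul_one]
  rw [this, h0, zero_mul]

theorem caseA_isField (hn : 0 < n) (hnoaf : IsNOAFRing (PowerSeries R) n) : IsField R := by
  rw [IsLocalRing.isField_iff_maximalIdeal_eq]
  set p := IsLocalRing.maximalIdeal R with hpdef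
  have hpn : p ^ n = ⊥ := caseA_pow_eq_bot hn hnoaf
  by_contra hp
  obtain ⟨s, hs_mem, hs0⟩ := Submodule.exists_mem_ne_zero_of_ne_bot hp
  classical
  have hex : ∃ j, s ^ j = 0 := ⟨n, by
    have : s ^ n ∈ p ^ n := Ideal.pow_mem_pow hs_mem n
    rwa [hpn, Submodule.mem_bot] at this⟩
  set j := Nat.find hex with hjdef
  have hj : s ^ j = 0 := Nat.find_spec hex
  have hj2 : 2 ≤ j := by
    by_contra hlt
    interval_cases j
    · simp at hj
    · simp at hj
      exact hs0 hj
  set r := s ^ (j - 1) with hrdef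
  have hr0 : r ≠ 0 := Nat.find_min hex (by omega)
  have hrp : r ∈ p := p.pow_mem_of_mem hs_mem _ (by omega)
  have hr2 : r * r = 0 := by
    rw [hrdef, ← pow_add]
    have h21 : j - 1 + (j - 1) = j + (j - 2) := by omega
    rw [h21, pow_add, hj, zero_mul]
  have hrn : r ^ n = 0 := by
    have : r ^ n ∈ p ^ n := Ideal.pow_mem_pow hrp n
    rwa [hpn, Submodule.mem_bot] at this
  set M : Ideal (PowerSeries R) := Ideal.comap (constantCoeff) p with hMdef
  have hMnon : ∀ x ∈ M, ¬IsUnit x := by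
    intro x hx hu
    have := isUnit_iff_constantCoeff.mp hu
    exact (IsLocalRing.mem_maximalIdeal _).mp (Ideal.mem_comap.mp hx) this
  set N := n * n with hNdef
  have hN1 : 1 ≤ N := Nat.one_le_iff_ne_zero.mpr (by positivity)
  set I := Ideal.span {(C r + X ^ N : PowerSeries R)} with hIdef
  have hIT : I ≠ ⊤ := by
    intro h
    have h1 : (1 : PowerSeries R) ∈ I := h ▸ Submodule.mem_top
    obtain ⟨g, hg⟩ := Ideal.mem_span_singleton'.mp h1
    have h2 := congrArg (constantCoeff) hg
    rw [map_mul, map_add, constantCoeff_C, map_pow, constantCoeff_X,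
      zero_pow (by omega), add_zero, map_one] at h2
    have : IsUnit r := IsUnit.of_mul_eq_one _ (by rw [mul_comm]; exact h2)
    exact (IsLocalRing.mem_maximalIdeal _).mp hrp this
  obtain ⟨m, K, hm0, hK, hIK⟩ := hnoaf I hIT
  have hgenI : (C r + X ^ N : PowerSeries R) ∈ I := Ideal.subset_span rfl
  have hMn : ∀ jj, M ^ n ≤ K jj := by
    intro jj
    have hgen : (C r + X ^ N : PowerSeries R) ∈ K jj := by
      have := prod_le_factor K jj
      rw [← hIK] at this
      exact this hgenI
    by_cases hPr : (K jj).IsPrime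
    · have hCnil : ∀ z ∈ p, C z ∈ K jj := by
        intro z hz
        refine hPr.mem_of_pow_mem n ?_
        have hzn : z ^ n = 0 := by
          have : z ^ n ∈ p ^ n := Ideal.pow_mem_pow hz n
          rwa [hpn, Submodule.mem_bot] at this
        rw [← map_pow, hzn, map_zero]
        exact Ideal.zero_mem _
      have hCr : (C r) ∈ K jj := hCnil r hrp
      have hXN : (X : PowerSeries R) ^ N ∈ K jj := by
        have := Ideal.sub_mem _ hgen hCr
        simpa using this
      have hX : (X : PowerSeries R) ∈ K jj := hPr.mem_of_pow_mem N hXN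
      have hMle : M ≤ K jj := by
        intro f hf
        obtain ⟨g, hg⟩ : (X : PowerSeries R) ∣ (f - C (constantCoeff f)) :=
          X_dvd_iff.mpr (by simp)
        have hfeq : f = C (constantCoeff f) + X * g := by rw [← hg]; ring
        rw [hfeq]
        exact Ideal.add_mem _ (hCnil _ (Ideal.mem_comap.mp hf))
          (Ideal.mul_mem_right _ _ hX)
      exact (Ideal.pow_le_self hn.ne').trans hMle
    · exact nonprime_noa_pow (hK jj) hn hPr hMnon
  have hlow : M ^ (n * m) ≤ I := by
    rw [hIK, pow_mul]
    refine le_trans ?_ (prod_le_prod (fun _ => M ^ n) K hMn)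
    simp [Finset.prod_const]
  have hXM : (X : PowerSeries R) ∈ M := Ideal.mem_comap.mpr (by simp)
  have hXmem : (X : PowerSeries R) ^ (n * m) ∈ I := hlow (Ideal.pow_mem_pow hXM _)
  set k := n * m with hkdef
  obtain ⟨g, hg⟩ := Ideal.mem_span_singleton'.mp hXmem
  rw [mul_add] at hg
  -- step 1 : N ≤ k
  have hNk : N ≤ k := by
    by_contra hlt
    push_neg at hlt
    have e := congrArg (coeff k) hg
    rw [map_add, coeff_mul_C, coeff_mul_X_pow', if_neg (by omega), coeff_X_pow,
      if_pos rfl, add_zero] at e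
    have : IsUnit r := IsUnit.of_mul_eq_one _ (by rw [mul_comm]; exact e)
    exact (IsLocalRing.mem_maximalIdeal _).mp hrp this
  -- step 2 : 2 * N ≤ k
  have h2Nk : 2 * N ≤ k := by
    by_contra hlt
    push_neg at hlt
    have e1 := congrArg (coeff k) hg
    rw [map_add, coeff_mul_C, coeff_mul_X_pow', if_pos hNk, coeff_X_pow, if_pos rfl] at e1
    have e2 := congrArg (coeff (k - N)) hg
    rw [map_add, coeff_mul_C, coeff_mul_X_pow', if_neg (by omega), coeff_X_pow,
      if_neg (by omega), add_zero] at e2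
    have h3 : coeff (k - N) g * r = r := by
      linear_combination r * e1 - coeff k g * hr2
    rw [e2] at h3
    exact hr0 h3.symm
  have hm2n : 2 * n ≤ m := by
    have : n * (2 * n) ≤ n * m := by
      calc n * (2 * n) = 2 * N := by ring
        _ ≤ k := h2Nk
        _ = n * m := rfl
    exact Nat.le_of_mul_le_mul_left this hn
  -- upper bound
  have hKM : ∀ jj, K jj ≤ M := by
    intro jj x hx
    have hxu : ¬IsUnit x := fun hu => (hK jj).1 (Ideal.eq_top_of_isUnit_mem _ hx hu)
    have hcu : ¬IsUnit (constantCoeff x) := fun hu => hxu (isUnit_iff_constantCoeff.mpr hu)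
    exact Ideal.mem_comap.mpr ((IsLocalRing.mem_maximalIdeal _).mpr hcu)
  have hIM : I ≤ M ^ m := by
    rw [hIK]
    refine le_trans (prod_le_prod K (fun _ => M) hKM) ?_
    simp [Finset.prod_const]
  have hrpm : r ∈ p ^ m := by
    have hmem : (C r + X ^ N : PowerSeries R) ∈ M ^ m := hIM hgenI
    have := (coeff_bound p m _ hmem).1
    rwa [map_add, constantCoeff_C, map_pow, constantCoeff_X, zero_pow (by omega),
      add_zero] at this
  have : r ∈ (⊥ : Ideal R) := by
    rw [← hpn]
    exact Ideal.pow_le_pow_right (by omega) hrpm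
  exact hr0 (Submodule.mem_bot _ |>.mp this)

end Forward



end P2

section P3


variable {S : Type*} [CommRing S] {n : ℕ} {K : Ideal S}

section CaseB

open PowerSeries

variable {R : Type*} [CommRing R] [Nontrivial R]

theorem caseB_factor (hn : 0 < n) (hnoaf : IsNOAFRing (PowerSeries R) n)
    (hwit : ∃ u v : R, ¬IsUnit u ∧ ¬IsUnit v ∧ u + v = 1)
    (a : Ideal R) (ha : a ≠ ⊤) :
    ∃ (s : ℕ) (P : Fin s → Ideal R), 0 < s ∧ (∀ i, (P i).IsPrime) ∧ (a = ∏ i, P i) ∧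
      (∀ i j, i ≠ j → P i ⊔ P j = ⊤) := by
  obtain ⟨u, v, hu, hv, huv⟩ := hwit
  have hu' : ¬IsUnit (C u) := fun h => hu (by simpa using h.map (constantCoeff))
  have hv' : ¬IsUnit (C v) := fun h => hv (by simpa using h.map (constantCoeff))
  have huv' : (C u) + (C v) = 1 := by rw [← map_add, huv, map_one]
  set I : Ideal (PowerSeries R) := Ideal.comap (constantCoeff) a with hIdef
  have hI : I ≠ ⊤ := by
    intro h
    apply ha
    rw [Ideal.eq_top_iff_one] at h ⊢
    simpa [hIdef] using h
  obtain ⟨s, K, hs, hK, hIK⟩ := hnoaf I hI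
  have hKp : ∀ j, (K j).IsPrime := fun j => noa_isPrime (hK j) hn hu' hv' huv'
  have hXI : (X : PowerSeries R) ∈ I := Ideal.mem_comap.mpr (by simp)
  have hXK : ∀ j, (X : PowerSeries R) ∈ K j := by
    intro j
    have := prod_le_factor K j
    rw [← hIK] at this
    exact this hXI
  have hker : ∀ j, RingHom.ker (constantCoeff) ≤ K j := by
    intro j f hf
    rw [RingHom.mem_ker] at hf
    obtain ⟨g, hg⟩ := X_dvd_iff.mpr hf
    rw [hg]
    exact Ideal.mul_mem_right _ _ (hXK j)
  refine ⟨s, fun j => Ideal.map (constantCoeff) (K j), hs, ?_, ?_, ?_⟩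
  · intro j
    haveI := hKp j
    exact Ideal.map_isPrime_of_surjective constantCoeff_surj (hker j)
  · calc a = Ideal.map (constantCoeff) (Ideal.comap (constantCoeff) a) :=
        (Ideal.map_comap_of_surjective _ constantCoeff_surj a).symm
      _ = Ideal.map (constantCoeff) (∏ j, K j) := by rw [← hIK]
      _ = ∏ j, Ideal.map (constantCoeff) (K j) := map_finprod _ K
  · intro i j hij
    have hXij : (X : PowerSeries R) ∈ K i * K j := by
      have := prod_le_pair K hij
      rw [← hIK] at this
      exact this hXI
    have key : ∀ f ∈ K i * K j, (coeff 1) f ∈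
        Ideal.map (constantCoeff) (K i) ⊔ Ideal.map (constantCoeff) (K j) := by
      intro f hf
      refine Submodule.mul_induction_on hf ?_ ?_
      · intro g hg h hh
        have hco : (coeff 1) (g * h) =
            (constantCoeff) g * (coeff 1) h + (coeff 1) g * (constantCoeff) h := by
          rw [coeff_mul, Finset.Nat.sum_antidiagonal_eq_sum_range_succ_mk]
          simp [Finset.sum_range_succ, coeff_zero_eq_constantCoeff]
        rw [hco]
        refine Ideal.add_mem _ (Ideal.mem_sup_left ?_) (Ideal.mem_sup_right ?_)
        · exact Ideal.mul_mem_right _ _ (Ideal.mem_map_of_mem _ hg)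
        · exact Ideal.mul_mem_left _ _ (Ideal.mem_map_of_mem _ hh)
      · intro g h hg hh
        rw [map_add]
        exact Ideal.add_mem _ hg hh
    have h1 := key X hXij
    rw [coeff_one_X] at h1
    rw [Ideal.eq_top_iff_one]
    exact h1

theorem caseB_vnr (hn : 0 < n) (hnoaf : IsNOAFRing (PowerSeries R) n)
    (hwit : ∃ u v : R, ¬IsUnit u ∧ ¬IsUnit v ∧ u + v = 1) (r : R) :
    ∃ c, c * (r * r) = r := by
  by_cases htop : Ideal.span {r * r} = (⊤ : Ideal R)
  · exact Ideal.mem_span_singleton'.mp (htop ▸ Submodule.mem_top)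
  obtain ⟨s, P, hs, hPp, hPeq, hPco⟩ := caseB_factor hn hnoaf hwit _ htop
  have hrP : ∀ i, r ∈ P i := by
    intro i
    have hr2 : r * r ∈ P i := by
      have := prod_le_factor P i
      rw [← hPeq] at this
      exact this (Ideal.subset_span rfl)
    rcases (hPp i).mem_or_mem hr2 with h | h <;> exact h
  have := mem_prod_of_pairwise P hPco r hrP
  rw [← hPeq] at this
  exact Ideal.mem_span_singleton'.mp this

theorem caseB_result {R : Type u} [CommRing R] [Nontrivial R]
    (hn : 0 < n) (hnoaf : IsNOAFRing (PowerSeries R) n)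
    (hwit : ∃ u v : R, ¬IsUnit u ∧ ¬IsUnit v ∧ u + v = 1) :
    ∃ (s : ℕ) (F : Fin s → Type u) (_ : ∀ i, Field (F i)),
      Nonempty (R ≃+* ∀ i, F i) := by
  have hbot : (⊥ : Ideal R) ≠ ⊤ := by
    intro h
    have : (1 : R) ∈ (⊥ : Ideal R) := h ▸ Submodule.mem_top
    simpa using this
  obtain ⟨s, P, hs, hPp, hPeq, hPco⟩ := caseB_factor hn hnoaf hwit ⊥ hbot
  have hfield : ∀ i, IsField (R ⧸ P i) := by
    intro i
    haveI := hPp i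
    refine ⟨exists_pair_ne _, mul_comm, ?_⟩
    intro x hx0
    obtain ⟨r, rfl⟩ := Ideal.Quotient.mk_surjective x
    obtain ⟨c, hc⟩ := caseB_vnr hn hnoaf hwit r
    set q := Ideal.Quotient.mk (P i) with hqdef
    have h1 : q c * (q r * q r) = q r := by rw [← map_mul, ← map_mul, hc]
    have h2 : q r * (q c * q r - 1) = 0 := by linear_combination h1
    rcases mul_eq_zero.mp h2 with h | h
    · exact absurd h hx0
    · exact ⟨q c, by rw [mul_comm]; exact sub_eq_zero.mp h⟩
  have hinf : (⨅ i, P i) = ⊥ := by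
    refine le_antisymm ?_ bot_le
    intro x hx
    have hx' : ∀ i, x ∈ P i := fun i => (Submodule.mem_iInf _).mp hx i
    have := mem_prod_of_pairwise P hPco x hx'
    rwa [← hPeq] at this
  have hcop : Pairwise fun i j => IsCoprime (P i) (P j) := by
    intro i j hij
    exact Ideal.isCoprime_iff_sup_eq.mpr (hPco i j hij)
  have e : R ≃+* ∀ i, R ⧸ P i :=
    (RingEquiv.quotientBot R).symm.trans
      ((Ideal.quotEquivOfEq hinf.symm).trans (Ideal.quotientInfRingEquivPiQuotient P hcop))
  refine ⟨s, fun i => R ⧸ P i, fun i => (hfield i).toField, ⟨?_⟩⟩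
  exact e

end CaseB



end P3

section P4


variable {n : ℕ}

/-- primes are n-OA ideals -/
theorem prime_isNOA {T : Type*} [CommRing T] {P : Ideal T} (hP : P.IsPrime) :
    IsNOAIdeal n P := by
  refine ⟨hP.ne_top, ?_⟩
  intro a _ hmem
  have hex : ∃ i, a i ∈ P := by
    by_contra hc
    push_neg at hc
    revert hmem
    simp only [imp_false]
    intro hmem
    -- product of elements not in a prime is not in it
    have : ∀ (s : Finset (Fin (n+1))), (∏ i ∈ s, a i) ∉ P := by
      intro s
      induction s using Finset.induction with
      | empty => simpa using fun h => hP.ne_top (P.eq_top_of_isUnit_mem h isUnit_one)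
      | insert _ _ hni ih =>
        rw [Finset.prod_insert hni]
        intro hmul
        rcases hP.mem_or_mem hmul with h | h
        · exact hc _ h
        · exact ih h
    exact this Finset.univ hmem
  obtain ⟨i, hi⟩ := hex
  rcases Fin.eq_castSucc_or_eq_last i with ⟨j, rfl⟩ | rfl
  · left
    rw [← Finset.mul_prod_erase Finset.univ (fun l : Fin n => a l.castSucc)
      (Finset.mem_univ j)]
    exact Ideal.mul_mem_right _ _ hi
  · right; exact hi

/-- transfer of `IsNOAFRing` along ring equivalences -/
theorem noaf_transfer {A B : Type*} [CommRing A] [CommRing B] (e : A ≃+* B)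
    (h : IsNOAFRing A n) : IsNOAFRing B n := by
  intro I hI
  have hJ : Ideal.comap (e : A →+* B) I ≠ ⊤ := by
    intro htop
    apply hI
    rw [Ideal.eq_top_iff_one] at htop ⊢
    simpa using htop
  obtain ⟨m, K, hm, hK, hJK⟩ := h _ hJ
  have hmm : ∀ (j : Fin m) (x : B), x ∈ (K j).map (e : A →+* B) ↔ e.symm x ∈ K j := by
    intro j x
    rw [Ideal.map_comap_of_equiv, Ideal.mem_comap]
  refine ⟨m, fun j => (K j).map (e : A →+* B), hm, ?_, ?_⟩
  · intro j
    constructor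
    · intro htop
      apply (hK j).1
      rw [Ideal.eq_top_iff_one] at htop ⊢
      have := (hmm j 1).mp htop
      simpa using this
    · intro a ha hmem
      have h2 := (hK j).2 (fun i => e.symm (a i))
        (fun i hu => ha i (by simpa using hu.map (e : A →+* B)))
        (by rw [← map_prod]; exact (hmm j _).mp hmem)
      rcases h2 with h2 | h2
      · left
        refine (hmm j _).mpr ?_
        rw [map_prod]
        exact h2
      · right
        exact (hmm j _).mpr h2
  · have hIm : I = Ideal.map (e : A →+* B) (Ideal.comap (e : A →+* B) I) :=
      (Ideal.map_comap_of_surjective _ e.surjective I).symm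
    rw [hIm, hJK, map_finprod]

section PiMachinery

variable {m : ℕ} {T : Fin m → Type*} [∀ i, CommRing (T i)]

def piIdeal (A : ∀ i, Ideal (T i)) : Ideal (∀ i, T i) where
  carrier := {x | ∀ i, x i ∈ A i}
  add_mem' hx hy i := (A _).add_mem (hx i) (hy i)
  zero_mem' i := (A i).zero_mem
  smul_mem' c x hx i := by
    have := (A i).mul_mem_left (c i) (hx i)
    simpa [smul_eq_mul] using this

theorem mem_piIdeal {A : ∀ i, Ideal (T i)} {x : ∀ i, T i} :
    x ∈ piIdeal A ↔ ∀ i, x i ∈ A i := Iff.rfl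

theorem piIdeal_top : piIdeal (fun i => (⊤ : Ideal (T i))) = ⊤ := by
  rw [eq_top_iff]
  intro x _
  exact fun i => Submodule.mem_top

theorem single_mem_piIdeal {A : ∀ i, Ideal (T i)} {i : Fin m} {w : T i} (hw : w ∈ A i) :
    Pi.single i w ∈ piIdeal A := by
  intro j
  by_cases hj : j = i
  · subst hj; rwa [Pi.single_eq_same]
  · rw [Pi.single_eq_of_ne hj]; exact (A j).zero_mem

theorem piIdeal_mul (A B : ∀ i, Ideal (T i)) :
    piIdeal A * piIdeal B = piIdeal (fun i => A i * B i) := by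
  refine le_antisymm ?_ ?_
  · rw [Ideal.mul_le]
    intro r hr s hs i
    exact Ideal.mul_mem_mul (hr i) (hs i)
  · intro z hz
    rw [← Finset.univ_sum_single z]
    refine Submodule.sum_mem _ ?_
    intro i _
    have hzi : z i ∈ A i * B i := hz i
    refine Submodule.mul_induction_on hzi ?_ ?_
    · intro a ha b hb
      rw [Pi.single_mul]
      exact Ideal.mul_mem_mul (single_mem_piIdeal ha) (single_mem_piIdeal hb)
    · intro x y hx hy
      rw [Pi.single_add]
      exact Submodule.add_mem _ hx hy

def slot (i0 : Fin m) (P : Ideal (T i0)) : Ideal (∀ i, T i) :=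
  piIdeal (Function.update (fun i => (⊤ : Ideal (T i))) i0 P)

theorem mem_slot {i0 : Fin m} {P : Ideal (T i0)} {x : ∀ i, T i} :
    x ∈ slot i0 P ↔ x i0 ∈ P := by
  constructor
  · intro h
    have := h i0
    rwa [Function.update_self] at this
  · intro h i
    by_cases hi : i = i0
    · subst hi; rwa [Function.update_self]
    · rw [Function.update_of_ne hi]; exact Submodule.mem_top

theorem slot_top (i0 : Fin m) : slot i0 (⊤ : Ideal (T i0)) = ⊤ := by
  rw [eq_top_iff]
  intro x _
  exact mem_slot.mpr Submodule.mem_top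

theorem slot_prime {i0 : Fin m} {P : Ideal (T i0)} (hP : P.IsPrime) :
    (slot i0 P).IsPrime := by
  constructor
  · intro htop
    have : (1 : ∀ i, T i) ∈ slot i0 P := htop ▸ Submodule.mem_top
    exact hP.ne_top (P.eq_top_of_isUnit_mem (mem_slot.mp this) isUnit_one)
  · intro x y hxy
    have : x i0 * y i0 ∈ P := by
      have := mem_slot.mp hxy
      simpa using this
    rcases hP.mem_or_mem this with h | h
    · exact Or.inl (mem_slot.mpr h)
    · exact Or.inr (mem_slot.mpr h)

theorem slot_mul (i0 : Fin m) (P Q : Ideal (T i0)) :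
    slot i0 (P * Q) = slot i0 P * slot i0 Q := by
  rw [slot, slot, slot, piIdeal_mul]
  congr 1
  funext i
  by_cases hi : i = i0
  · subst hi; simp [Function.update_self]
  · simp [Function.update_of_ne hi]

theorem slot_list_prod (i0 : Fin m) (L : List (Ideal (T i0))) :
    slot i0 L.prod = (L.map (slot i0)).prod := by
  induction L with
  | nil => simpa using slot_top i0
  | cons P L ih => rw [List.prod_cons, slot_mul, List.map_cons, List.prod_cons, ih]

theorem piIdeal_decompose (J : Ideal (∀ i, T i)) :
    J = piIdeal (fun i => Ideal.map (Pi.evalRingHom T i) J) := by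
  refine le_antisymm ?_ ?_
  · intro x hx i
    exact Ideal.mem_map_of_mem _ hx
  · intro z hz
    rw [← Finset.univ_sum_single z]
    refine Submodule.sum_mem _ ?_
    intro i _
    have hsurj : Function.Surjective (Pi.evalRingHom T i) := fun y =>
      ⟨Pi.single i y, Pi.single_eq_same i y⟩
    obtain ⟨w, hwJ, hwz⟩ := (Ideal.mem_map_iff_of_surjective _ hsurj).mp (hz i)
    have heq : Pi.single i (z i) = Pi.single i (1 : T i) * w := by
      funext j
      by_cases hj : j = i
      · subst hj
        simp only [Pi.mul_apply, Pi.single_eq_same, one_mul]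
        exact hwz.symm
      · simp [Pi.single_eq_of_ne hj]
    rw [heq]
    exact Ideal.mul_mem_left _ _ hwJ

theorem piIdeal_eq_prod_slot (A : ∀ i, Ideal (T i)) :
    piIdeal A = ∏ i, slot i (A i) := by
  classical
  have key : ∀ s : Finset (Fin m),
      (∏ i ∈ s, slot i (A i)) = piIdeal (fun j => if j ∈ s then A j else ⊤) := by
    intro s
    induction s using Finset.induction with
    | empty =>
      simp only [Finset.prod_empty, Finset.notMem_empty, if_false]
      rw [Ideal.one_eq_top, piIdeal_top]
    | insert a s ha ih =>
      rw [Finset.prod_insert ha, ih, slot, piIdeal_mul]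
      congr 1
      funext j
      by_cases hj : j = a
      · subst hj
        simp [Function.update_self, ha, Ideal.mul_top]
      · simp only [Function.update_of_ne hj, Ideal.top_mul]
        by_cases hjs : j ∈ s <;> simp [hjs, hj, Finset.mem_insert]
  rw [key Finset.univ]
  congr 1
  funext j
  simp

/-- finite products of "list ZPI" rings are list-ZPI -/
theorem pi_listZPI
    (hT : ∀ (i : Fin m) (I : Ideal (T i)), I ≠ ⊤ →
      ∃ L : List (Ideal (T i)), L ≠ [] ∧ (∀ P ∈ L, P.IsPrime) ∧ I = L.prod)
    (J : Ideal (∀ i, T i)) (hJ : J ≠ ⊤) :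
    ∃ L : List (Ideal (∀ i, T i)), L ≠ [] ∧ (∀ P ∈ L, P.IsPrime) ∧ J = L.prod := by
  classical
  set A := fun i => Ideal.map (Pi.evalRingHom T i) J with hAdef
  have hJA : J = piIdeal A := piIdeal_decompose J
  have key : ∀ i : Fin m, ∃ Li : List (Ideal (∀ j, T j)),
      (∀ P ∈ Li, P.IsPrime) ∧ (Li.prod = slot i (A i)) ∧ (A i ≠ ⊤ → Li ≠ []) := by
    intro i
    by_cases h : A i = ⊤
    · refine ⟨[], by simp, ?_, fun hc => absurd h hc⟩
      rw [List.prod_nil, h, Ideal.one_eq_top, slot_top]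
    · obtain ⟨Mi, hM1, hM2, hM3⟩ := hT i (A i) h
      refine ⟨Mi.map (slot i), ?_, ?_, ?_⟩
      · intro P hP
        obtain ⟨Q, hQ, rfl⟩ := List.mem_map.mp hP
        exact slot_prime (hM2 Q hQ)
      · rw [← slot_list_prod, ← hM3]
      · intro _
        simpa using hM1
  choose Li hLi1 hLi2 hLi3 using key
  set L := ((List.finRange m).map Li).flatten with hLdef
  have hprod : L.prod = ∏ i, slot i (A i) := by
    rw [hLdef, List.prod_flatten, List.map_map]
    have : ((List.finRange m).map (List.prod ∘ Li)) =
        ((List.finRange m).map (fun i => slot i (A i))) := by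
      refine List.map_congr_left ?_
      intro i _
      exact hLi2 i
    rw [this, ← Fin.prod_univ_def]
  have hex_ne : ∃ i, A i ≠ ⊤ := by
    by_contra hc
    push_neg at hc
    apply hJ
    rw [hJA]
    have : A = fun i => (⊤ : Ideal (T i)) := funext hc
    rw [this, piIdeal_top]
  obtain ⟨i0, hi0⟩ := hex_ne
  have hLi0 : Li i0 ≠ [] := hLi3 i0 hi0
  obtain ⟨P0, hP0⟩ := List.exists_mem_of_ne_nil _ hLi0
  have hP0L : P0 ∈ L := by
    rw [hLdef]
    exact List.mem_flatten.mpr ⟨Li i0, List.mem_map_of_mem (List.mem_finRange i0), hP0⟩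
  refine ⟨L, List.ne_nil_of_mem hP0L, ?_, ?_⟩
  · intro P hP
    rw [hLdef] at hP
    obtain ⟨l, hl, hPl⟩ := List.mem_flatten.mp hP
    obtain ⟨i, _, rfl⟩ := List.mem_map.mp hl
    exact hLi1 i P hPl
  · rw [hJA, piIdeal_eq_prod_slot, hprod]

end PiMachinery

/-- ideals of power series over a field -/
theorem fieldPS_listZPI (K : Type*) [Field K] (I : Ideal (PowerSeries K)) (hI : I ≠ ⊤) :
    ∃ L : List (Ideal (PowerSeries K)), L ≠ [] ∧ (∀ P ∈ L, P.IsPrime) ∧ I = L.prod := by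
  by_cases h0 : I = ⊥
  · refine ⟨[⊥], by simp, ?_, by simp [h0]⟩
    intro P hP
    rw [List.mem_singleton] at hP
    subst hP
    exact Ideal.bot_prime
  · obtain ⟨k, hk⟩ :=
      IsDiscreteValuationRing.ideal_eq_span_pow_irreducible h0 PowerSeries.X_irreducible
    have hk0 : k ≠ 0 := by
      intro h
      apply hI
      rw [hk, h, pow_zero, Ideal.span_singleton_one]
    refine ⟨List.replicate k (Ideal.span {PowerSeries.X}), ?_, ?_, ?_⟩
    · intro h
      apply hk0
      simpa using congrArg List.length h
    · intro P hP
      rw [List.eq_of_mem_replicate hP]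
      exact (Ideal.span_singleton_prime PowerSeries.X_ne_zero).mpr PowerSeries.X_prime
    · rw [List.prod_replicate, Ideal.span_singleton_pow, hk]

theorem listZPI_noaf {T : Type*} [CommRing T]
    (h : ∀ I : Ideal T, I ≠ ⊤ → ∃ L : List (Ideal T), L ≠ [] ∧ (∀ P ∈ L, P.IsPrime) ∧ I = L.prod) :
    IsNOAFRing T n := by
  intro I hI
  obtain ⟨L, hL0, hLp, hLeq⟩ := h I hI
  refine ⟨L.length, fun j => L.get j, List.length_pos_iff.mpr hL0, ?_, ?_⟩
  · intro j
    exact prime_isNOA (hLp _ (List.get_mem L j))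
  · rw [hLeq]
    calc L.prod = (List.ofFn L.get).prod := by rw [List.ofFn_get]
      _ = ∏ j, L.get j := List.prod_ofFn

/-- congruence of power series rings -/
noncomputable def psCongr {A B : Type*} [CommRing A] [CommRing B] (e0 : A ≃+* B) :
    PowerSeries A ≃+* PowerSeries B where
  toFun := PowerSeries.map (e0 : A →+* B)
  invFun := PowerSeries.map (e0.symm : B →+* A)
  left_inv f := by
    ext k
    simp [PowerSeries.coeff_map]
  right_inv f := by
    ext k
    simp [PowerSeries.coeff_map]
  map_mul' := map_mul _
  map_add' := map_add _

/-- power series over a finite product -/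
noncomputable def psPi {m : ℕ} (F : Fin m → Type*) [∀ i, CommRing (F i)] :
    PowerSeries (∀ i, F i) ≃+* ∀ i, PowerSeries (F i) := by
  refine RingEquiv.ofBijective (RingHom.pi fun i => PowerSeries.map (Pi.evalRingHom F i)) ⟨?_, ?_⟩
  · intro f g heq
    refine PowerSeries.ext fun k => ?_
    funext i
    have := congrArg (PowerSeries.coeff k) (congrFun heq i)
    simpa [PowerSeries.coeff_map] using this
  · intro g
    refine ⟨PowerSeries.mk fun k i => PowerSeries.coeff k (g i), ?_⟩
    funext i
    ext k
    simp [PowerSeries.coeff_map, PowerSeries.coeff_mk]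

theorem backward {R : Type*} [CommRing R] (m : ℕ) (F : Fin m → Type*)
    (instF : ∀ i, Field (F i)) (e0 : R ≃+* ∀ i, F i) :
    IsNOAFRing (PowerSeries R) n := by
  have hpi : IsNOAFRing (∀ i, PowerSeries (F i)) n :=
    listZPI_noaf (pi_listZPI (fun i I hI => fieldPS_listZPI _ I hI))
  exact noaf_transfer ((psCongr e0).trans (psPi F)).symm hpi



end P4

end NOAAux

theorem stmt16 {R : Type u} [CommRing R] [Nontrivial R] (n : ℕ) (hn : 0 < n) :
    IsNOAFRing (PowerSeries R) n ↔
      ∃ (m : ℕ) (F : Fin m → Type u) (_ : ∀ i, Field (F i)),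
        Nonempty (R ≃+* ((i : Fin m) → F i)) := by
  constructor
  · intro hnoaf
    by_cases hadd : ∀ a b : R, ¬IsUnit a → ¬IsUnit b → ¬IsUnit (a + b)
    · haveI : IsLocalRing R :=
        IsLocalRing.of_nonunits_add (fun a b ha hb => hadd a b ha hb)
      have hf := NOAAux.caseA_isField hn hnoaf
      refine ⟨1, fun _ => R, fun _ => hf.toField, ⟨?_⟩⟩
      exact RingEquiv.ofBijective (RingHom.pi fun _ : Fin 1 => RingHom.id R)
        ⟨fun a b h => by simpa using congrFun h 0,
         fun f => ⟨f 0, funext fun i => by rw [Subsingleton.elim i 0]; rfl⟩⟩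
    · push_neg at hadd
      obtain ⟨x, y, hx, hy, hxyu⟩ := hadd
      obtain ⟨w, hw⟩ := hxyu
      have hu : ¬IsUnit (x * ↑w⁻¹) := by
        intro h
        apply hx
        have hx' : x = x * ↑w⁻¹ * ↑w := by rw [mul_assoc, Units.inv_mul, mul_one]
        rw [hx']
        exact h.mul w.isUnit
      have hv : ¬IsUnit (y * ↑w⁻¹) := by
        intro h
        apply hy
        have hy' : y = y * ↑w⁻¹ * ↑w := by rw [mul_assoc, Units.inv_mul, mul_one]
        rw [hy']
        exact h.mul w.isUnit
      have huv : x * ↑w⁻¹ + y * ↑w⁻¹ = 1 := by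
        rw [← add_mul, ← hw, Units.mul_inv]
      exact NOAAux.caseB_result hn hnoaf ⟨_, _, hu, hv, huv⟩
  · rintro ⟨m, F, instF, ⟨e0⟩⟩
    exact NOAAux.backward m F instF e0
end
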